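/- arXiv:2102.09100 — 2 statements merged into one kernel-verified Lean document; each statement's English description precedes it below -/
import Mathlib

section
/- Let p ∈ (0,1) and let 𝓗 = (H, ξ) be a signed hypergraph. For each e ∈ E(H) let B(e) be an H-dominating base over e, and let 𝖡(e) = (r, e, ι_e, B(e), d^{H_+}(e), {d^{H_+}_b(e)}_{b∈B(e)}) be the induced weighted base with weights taken from H_+. With 𝔅 = {𝖡(e)}_{e∈E(H)} and the associated seminorm ‖·‖*_𝔅, let C ⊆ A_{n,r} be a set of diameter at most ε p under ‖·‖*_𝔅 for some ε ∈ (0,1], and assume there exist Q₀ ∈ conv(C) and L ≥ 1 such that hom(𝓗', Q₀) ≤ L n^{v(H')} p^{e(H'_+)} for every signed subgraph 𝓗' ⊊ 𝓗. Then there is a constant C(𝓗), depending only on 𝓗, such that for all collections P = (P^e)_{e∈E(H)} and Q = (Q^e)_{e∈E(H)} with every P^e, Q^e ∈ conv(C): |hom(𝓗, P) − hom(𝓗, Q)| ≤ C(𝓗) L ε n^{v(H)} p^{e(H_+)}. -/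
open scoped Classical
open Finset

/-! ### Tensors -/

/-- Order-`r` tensors of size `n`. -/
abbrev Tensor (n r : ℕ) : Type := (Fin r → Fin n) → ℝ

/-- `r`-element subsets of `[n]`. -/
abbrev Idx (n r : ℕ) := {I : Finset (Fin n) // I.card = r}

/-- Evaluation of a tensor at an `r`-element subset, via the monotone enumeration. -/
noncomputable def setEval {n r : ℕ} (Z : Tensor n r) (I : Idx n r) : ℝ :=
  Z fun k => ((I.1.orderIsoOfFin I.2) k).1

/-- Symmetric Boolean tensors supported on injective tuples (adjacency tensors). -/
def adjSet (n r : ℕ) : Set (Tensor n r) :=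
  {A | (∀ (σ : Equiv.Perm (Fin r)) (x : Fin r → Fin n), A (x ∘ σ) = A x) ∧
    (∀ x, A x = 0 ∨ A x = 1) ∧ ∀ x, ¬Function.Injective x → A x = 0}

/-- Symmetric `[0,1]`-valued tensors supported on injective tuples. -/
def wtSet (n r : ℕ) : Set (Tensor n r) :=
  {Q | (∀ (σ : Equiv.Perm (Fin r)) (x : Fin r → Fin n), Q (x ∘ σ) = Q x) ∧
    (∀ x, 0 ≤ Q x ∧ Q x ≤ 1) ∧ ∀ x, ¬Function.Injective x → Q x = 0}

/-- The tensor equal to `1` whenever all coordinates are distinct and `0` otherwise. -/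
noncomputable def Jten (n r : ℕ) : Tensor n r := fun x => if Function.Injective x then 1 else 0

/-! ### Random hypergraphs -/

/-- A selection of hyperedges: a Boolean function on `r`-element subsets of `[n]`. -/
abbrev EdgeSel (n r : ℕ) := Idx n r → Bool

/-- The adjacency tensor of a hyperedge selection. -/
noncomputable def adjOf {n r : ℕ} (ω : EdgeSel n r) : Tensor n r := fun x =>
  if h : Function.Injective x then
    (if ω ⟨Finset.image x Finset.univ, by
        rw [Finset.card_image_of_injective _ h, Finset.card_univ, Fintype.card_fin]⟩
      then 1 else 0)
  else 0

/-- The product-Bernoulli weight of a hyperedge selection, with success probability `Q(I)`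
for the edge `I`. -/
noncomputable def wWeight {n r : ℕ} (Q : Tensor n r) (ω : EdgeSel n r) : ℝ :=
  ∏ I : Idx n r, if ω I then setEval Q I else 1 - setEval Q I

/-- Probability of a set of tensors under the inhomogeneous Erdős–Rényi measure `μ_Q`. -/
noncomputable def muQ (n r : ℕ) (Q : Tensor n r) (E : Set (Tensor n r)) : ℝ :=
  ∑ ω : EdgeSel n r, if adjOf ω ∈ E then wWeight Q ω else 0

/-- Probability of a set of tensors under the Erdős–Rényi measure `μ_p`. -/
noncomputable def muP (n r : ℕ) (p : ℝ) : Set (Tensor n r) → ℝ := muQ n r fun _ => p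

/-- Expectation of a functional of the adjacency tensor under `μ_Q`. -/
noncomputable def expQ (n r : ℕ) (Q : Tensor n r) (f : Tensor n r → ℝ) : ℝ :=
  ∑ ω : EdgeSel n r, wWeight Q ω * f (adjOf ω)

/-- Variance of a functional of the adjacency tensor under `μ_Q`. -/
noncomputable def varQ (n r : ℕ) (Q : Tensor n r) (f : Tensor n r → ℝ) : ℝ :=
  expQ n r Q fun A => (f A - expQ n r Q f) ^ 2

/-! ### Relative entropy -/

/-- Relative entropy of Bernoulli(x) with respect to Bernoulli(p). -/
noncomputable def entBer (p x : ℝ) : ℝ :=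
  x * Real.log (x / p) + (1 - x) * Real.log ((1 - x) / (1 - p))

/-- `I_p(Q)`, the relative entropy of `μ_Q` with respect to `μ_p`. -/
noncomputable def entRate (n r : ℕ) (p : ℝ) (Q : Tensor n r) : ℝ :=
  ∑ I : Idx n r, entBer p (setEval Q I)

/-! ### Weighted bases and test tensors -/

/-- The data of a weighted base over an `r`-element set (identified with `Fin r` via the
bijection `ι`). -/
structure WBase (r : ℕ) where
  B : Finset (Finset (Fin r))
  dstar : ℕ
  d : Finset (Fin r) → ℕ

/-- The axioms of a weighted base: `∅ ∈ B`, members are proper subsets, nonempty members are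
pairwise incomparable, and the weights satisfy `d_b ≤ d_*`, `d_∅ = 0`. -/
def WBase.Valid {r : ℕ} (Bw : WBase r) : Prop :=
  ∅ ∈ Bw.B ∧ (∀ b ∈ Bw.B, b ≠ Finset.univ) ∧
    (∀ b₁ ∈ Bw.B, ∀ b₂ ∈ Bw.B, b₁.Nonempty → b₂.Nonempty → b₁ ≠ b₂ → ¬b₁ ⊆ b₂) ∧
    (∀ b ∈ Bw.B, Bw.d b ≤ Bw.dstar) ∧ Bw.d ∅ = 0

/-- A system of Boolean factors, one for each subset of coordinates. -/
abbrev Factors (n r : ℕ) := (b : Finset (Fin r)) → ({v : Fin r // v ∈ b} → Fin n) → Bool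

/-- The test tensor with factor system `f`: the entrywise product over `b ∈ B` of the Boolean
tensors `t_b ∘ π_b`. -/
noncomputable def testFun {n r : ℕ} (Bw : WBase r) (f : Factors n r) : Tensor n r := fun x =>
  ∏ b ∈ Bw.B, if f b (fun v => x v.1) then (1 : ℝ) else 0

/-- `‖t_b‖₁`, the number of inputs on which the factor `t_b` equals one. -/
noncomputable def facNorm1 {n r : ℕ} (f : Factors n r) (b : Finset (Fin r)) : ℝ :=
  ((Finset.univ.filter fun y : {v : Fin r // v ∈ b} → Fin n => f b y = true).card : ℝ)

/-- The norm `‖T‖_Bw` of a test tensor, presented by its factor system. -/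
noncomputable def testNorm {n r : ℕ} (p : ℝ) (Bw : WBase r) (f : Factors n r) : ℝ :=
  max (∑ x : Fin r → Fin n, |testFun Bw f x|)
    (⨆ b ∈ Bw.B, (n : ℝ) ^ (r - b.card) * p ^ (Bw.dstar - Bw.d b) * facNorm1 f b)

/-- The dual seminorm `‖Z‖*_Bw = max_{T ∈ T_Bw} |⟨Z,T⟩| / ‖T‖_Bw`. -/
noncomputable def dualNorm {r : ℕ} (n : ℕ) (p : ℝ) (Bw : WBase r) (Z : Tensor n r) : ℝ :=
  ⨆ f : Factors n r,
    if ∃ x, testFun Bw f x ≠ 0 then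
      |∑ x : Fin r → Fin n, Z x * testFun Bw f x| / testNorm p Bw f
    else 0

/-- `W_{n,p}(Bw) = min_{b ∈ B} n^{r-|b|} p^{d_* - d_b + 2}`. -/
noncomputable def Wnp (n : ℕ) {r : ℕ} (p : ℝ) (Bw : WBase r) : ℝ :=
  sInf ((fun b => (n : ℝ) ^ (r - b.card) * p ^ (Bw.dstar - Bw.d b + 2)) '' ↑Bw.B)

/-! ### Families of weighted bases -/

/-- `‖Z‖*_BB = max_e ‖Z‖*_{Bw(e)}` for a finite family of weighted bases. -/
noncomputable def famDual {r m : ℕ} (n : ℕ) (p : ℝ) (BB : Fin m → WBase r)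
    (Z : Tensor n r) : ℝ :=
  ⨆ i, dualNorm n p (BB i) Z

/-- `W_{n,p}(BB) = min_e W_{n,p}(Bw(e))` for a finite family of weighted bases. -/
noncomputable def famW {r m : ℕ} (n : ℕ) (p : ℝ) (BB : Fin m → WBase r) : ℝ :=
  ⨅ i, Wnp n p (BB i)

/-- `U_BB(Q, δ)`, the `δ`-neighborhood of `Q` in `A_{n,r}` under `‖·‖*_BB`. -/
def nbhdFam {r m n : ℕ} (p δ : ℝ) (BB : Fin m → WBase r) (Q : Tensor n r) :
    Set (Tensor n r) :=
  {A | A ∈ adjSet n r ∧ famDual n p BB (fun x => Q x - A x) ≤ δ}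

/-- The outer approximation `(E)_{BB,δ} = ⋃_{A ∈ E} conv(U_BB(A,δ))`. -/
def outerFam {r m n : ℕ} (p δ : ℝ) (BB : Fin m → WBase r) (E : Set (Tensor n r)) :
    Set (Tensor n r) :=
  ⋃ A ∈ E, convexHull ℝ (nbhdFam p δ BB A)

/-- The inner approximation `(E)°_{BB,δ} = {Q ∈ Q_{n,r} : U_BB(Q,δ) ⊆ E}`. -/
def innerFam {r m n : ℕ} (p δ : ℝ) (BB : Fin m → WBase r) (E : Set (Tensor n r)) :
    Set (Tensor n r) :=
  {Q | Q ∈ wtSet n r ∧ nbhdFam p δ BB Q ⊆ E}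

/-! ### Hypergraphs -/

/-- An `r`-uniform hypergraph: a finite vertex type and a finite set of `r`-element edges. -/
structure RGraph (r : ℕ) where
  V : Type
  [fV : Fintype V]
  [dV : DecidableEq V]
  E : Finset (Finset V)
  card_edge : ∀ e ∈ E, e.card = r

attribute [instance] RGraph.fV RGraph.dV

/-- Evaluation `S(φ(e))` of a tensor at the image of an edge (zero if `φ` is not injective
on the edge). -/
noncomputable def edgeEval {n r : ℕ} {V : Type} [DecidableEq V] (Z : Tensor n r)
    (φ : V → Fin n) (e : Finset V) : ℝ :=
  if h : (e.image φ).card = r then setEval Z ⟨e.image φ, h⟩ else 0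

/-- Homomorphism count of the subgraph of `H` with edge set `E₀` (on the full vertex set). -/
noncomputable def homE {n r : ℕ} (H : RGraph r) (E₀ : Finset (Finset H.V))
    (Q : Tensor n r) : ℝ :=
  ∑ φ : H.V → Fin n, ∏ e ∈ E₀, edgeEval Q φ e

/-- `hom(H, Q)`. -/
noncomputable def homR {n r : ℕ} (H : RGraph r) (Q : Tensor n r) : ℝ := homE H H.E Q

/-- `t(H, Q) = hom(H,Q) / n^{v(H)}`. -/
noncomputable def tR {n r : ℕ} (H : RGraph r) (Q : Tensor n r) : ℝ :=
  homR H Q / (n : ℝ) ^ Fintype.card H.V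

/-- `t_p(H, Q) = hom(H,Q) / (n^{v(H)} p^{e(H)})`. -/
noncomputable def tp {n r : ℕ} (H : RGraph r) (p : ℝ) (Q : Tensor n r) : ℝ :=
  homR H Q / ((n : ℝ) ^ Fintype.card H.V * p ^ H.E.card)

/-- Multilinear homomorphism count for a collection of tensors indexed by the edges. -/
noncomputable def homColl {n r : ℕ} (H : RGraph r) (S : {e // e ∈ H.E} → Tensor n r) : ℝ :=
  ∑ φ : H.V → Fin n, ∏ e : {e // e ∈ H.E}, edgeEval (S e) φ e.1

/-- Normalized multilinear homomorphism count. -/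
noncomputable def tpColl {n r : ℕ} (H : RGraph r) (p : ℝ)
    (S : {e // e ∈ H.E} → Tensor n r) : ℝ :=
  homColl H S / ((n : ℝ) ^ Fintype.card H.V * p ^ H.E.card)

/-- Signed multilinear homomorphism count: positive edges contribute `S^e(φ(e))`,
negative edges contribute `1 - S^e(φ(e))`. -/
noncomputable def shomColl {n r : ℕ} (H : RGraph r) (sgn : Finset H.V → Bool)
    (S : {e // e ∈ H.E} → Tensor n r) : ℝ :=
  ∑ φ : H.V → Fin n, ∏ e : {e // e ∈ H.E},
    if sgn e.1 then edgeEval (S e) φ e.1 else 1 - edgeEval (S e) φ e.1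

/-- Signed homomorphism count of the subgraph with edge set `E₀`, with a single tensor. -/
noncomputable def shomE {n r : ℕ} (H : RGraph r) (sgn : Finset H.V → Bool)
    (E₀ : Finset (Finset H.V)) (Q : Tensor n r) : ℝ :=
  ∑ φ : H.V → Fin n, ∏ e ∈ E₀, (if sgn e then edgeEval Q φ e else 1 - edgeEval Q φ e)

/-! ### Degrees -/

/-- Degree of a vertex. -/
def vdeg {r : ℕ} (H : RGraph r) (v : H.V) : ℕ := (H.E.filter fun e => v ∈ e).card

/-- Maximum degree `Δ(H)`. -/
def maxDeg {r : ℕ} (H : RGraph r) : ℕ := Finset.univ.sup fun v => vdeg H v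

/-- Maximum degree with respect to a subset of the edges. -/
def maxDegOn {r : ℕ} (H : RGraph r) (E₀ : Finset (Finset H.V)) : ℕ :=
  Finset.univ.sup fun v : H.V => (E₀.filter fun e => v ∈ e).card

/-- `d^H(U)`: the number of edges `e' ≠ U` meeting `U`. -/
def edeg {V : Type} [DecidableEq V] (E₀ : Finset (Finset V)) (U : Finset V) : ℕ :=
  (E₀.filter fun e' => e' ≠ U ∧ (e' ∩ U).Nonempty).card

/-- `d^H_b(U)`: the number of edges `e'` with `∅ ≠ e' ∩ U ⊆ b`. -/
def edegSub {V : Type} [DecidableEq V] (E₀ : Finset (Finset V)) (b U : Finset V) : ℕ :=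
  (E₀.filter fun e' => (e' ∩ U).Nonempty ∧ e' ∩ U ⊆ b).card

/-! ### Base systems over a hypergraph -/

/-- The data of a base system over `H`: for each edge, an identification of `Fin r` with the
edge and a base of subsets of `Fin r`. -/
structure BaseSystem {r : ℕ} (H : RGraph r) where
  emb : (e : {e // e ∈ H.E}) → Fin r → H.V
  emb_inj : ∀ e, Function.Injective (emb e)
  emb_mem : ∀ e (k : Fin r), emb e k ∈ e.1
  B : (e : {e // e ∈ H.E}) → Finset (Finset (Fin r))

/-- The image in the vertex set of a subset of coordinates. -/
def BaseSystem.vimage {r : ℕ} {H : RGraph r} (S : BaseSystem H) (e : {e // e ∈ H.E})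
    (b : Finset (Fin r)) : Finset H.V :=
  b.image (S.emb e)

/-- Validity plus `H`-domination of a base system: each base satisfies the base axioms and
every overlap `e ∩ e'` is contained in (the image of) some member of the base. -/
def BaseSystem.Good {r : ℕ} {H : RGraph r} (S : BaseSystem H) : Prop :=
  ∀ e : {e // e ∈ H.E},
    ∅ ∈ S.B e ∧ (∀ b ∈ S.B e, b ≠ Finset.univ) ∧
      (∀ b₁ ∈ S.B e, ∀ b₂ ∈ S.B e, b₁.Nonempty → b₂.Nonempty → b₁ ≠ b₂ → ¬b₁ ⊆ b₂) ∧
      (∀ e' ∈ H.E, e' ≠ e.1 → ∃ b ∈ S.B e, e' ∩ e.1 ⊆ S.vimage e b)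

/-- The weighted base at an edge `e`, with weights given by the degree counts of `E₀`
(`d_* = d^{E₀}(e)`, `d_b = d^{E₀}_b(e)`). -/
def BaseSystem.wb {r : ℕ} {H : RGraph r} (S : BaseSystem H) (E₀ : Finset (Finset H.V))
    (e : {e // e ∈ H.E}) : WBase r :=
  { B := S.B e
    dstar := edeg E₀ e.1
    d := fun b => edegSub E₀ (S.vimage e b) e.1 }

/-- The seminorm `‖Z‖*_BB = max_{e ∈ E(H)} ‖Z‖*_{Bw(e)}` of a base system with weights
from `E₀`. -/
noncomputable def bsDualNorm {n r : ℕ} {H : RGraph r} (S : BaseSystem H)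
    (E₀ : Finset (Finset H.V)) (p : ℝ) (Z : Tensor n r) : ℝ :=
  ⨆ e : {e // e ∈ H.E}, dualNorm n p (S.wb E₀ e) Z

/-- `W_{n,p}(BB) = min_{e ∈ E(H)} W_{n,p}(Bw(e))` for a base system. -/
noncomputable def bsW {r : ℕ} {H : RGraph r} (S : BaseSystem H)
    (E₀ : Finset (Finset H.V)) (n : ℕ) (p : ℝ) : ℝ :=
  ⨅ e : {e // e ∈ H.E}, Wnp n p (S.wb E₀ e)

/-! ### Variational problems -/

/-- The upper-tail variational problem `Φ_{n,p}(H, u)`. -/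
noncomputable def Phi {r : ℕ} (H : RGraph r) (n : ℕ) (p u : ℝ) : ℝ :=
  sInf {x : ℝ | ∃ Q ∈ wtSet n r, tR H Q ≥ (1 + u) * p ^ H.E.card ∧ x = entRate n r p Q}

/-- The lower-tail variational problem `Ψ_{n,p}(H, u)`. -/
noncomputable def Psi {r : ℕ} (H : RGraph r) (n : ℕ) (p u : ℝ) : ℝ :=
  sInf {x : ℝ | ∃ Q ∈ wtSet n r, tR H Q ≤ (1 - u) * p ^ H.E.card ∧ x = entRate n r p Q}

/-! ### The parameter Δ'(H) -/

/-- A dominating base for the edge `e` of `H`, as a collection of vertex subsets. -/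
def IsDomBase {r : ℕ} (H : RGraph r) (e : Finset H.V) (B : Finset (Finset H.V)) : Prop :=
  ∅ ∈ B ∧ (∀ b ∈ B, b ⊆ e ∧ b ≠ e) ∧
    (∀ b₁ ∈ B, ∀ b₂ ∈ B, b₁.Nonempty → b₂.Nonempty → b₁ ≠ b₂ → ¬b₁ ⊆ b₂) ∧
    ∀ e' ∈ H.E, e' ≠ e → ∃ b ∈ B, e' ∩ e ⊆ b

/-- `d'_b(e)`. -/
noncomputable def dpb {r : ℕ} (H : RGraph r) (e b : Finset H.V) : ℝ :=
  if b = ∅ then ((edeg H.E e : ℝ) + 2) / (r : ℝ)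
  else ((edeg H.E (e \ b) : ℝ) + 1) / ((e \ b).card : ℝ)

/-- `d'_B(e) = max_{b ∈ B} d'_b(e)`. -/
noncomputable def dpBase {r : ℕ} (H : RGraph r) (e : Finset H.V)
    (B : Finset (Finset H.V)) : ℝ :=
  sSup (dpb H e '' ↑B)

/-- `d'(e)`: minimum over dominating bases. -/
noncomputable def dprime {r : ℕ} (H : RGraph r) (e : Finset H.V) : ℝ :=
  sInf {x : ℝ | ∃ B, IsDomBase H e B ∧ x = dpBase H e B}

/-- `Δ'(H) = max_{e ∈ E(H)} d'(e)`. -/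
noncomputable def DeltaPrime {r : ℕ} (H : RGraph r) : ℝ :=
  sSup (dprime H '' ↑H.E)

/-! ### Cut matrices (the case r = 2) -/

/-- The cut matrix `1_I ⊗ 1_J`, as a 2-tensor. -/
noncomputable def cut2 {n : ℕ} (I J : Finset (Fin n)) : Tensor n 2 := fun x =>
  if x 0 ∈ I ∧ x 1 ∈ J then 1 else 0

/-- `‖1_I ⊗ 1_J‖_{Δ,2} = (|I| ∨ n₀)(|J| ∨ n₀)` with `n₀ = n p^{Δ-1}`. -/
noncomputable def cutNormIJ (n : ℕ) (p : ℝ) (Δ : ℕ) (I J : Finset (Fin n)) : ℝ :=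
  max (I.card : ℝ) ((n : ℝ) * p ^ (Δ - 1)) * max (J.card : ℝ) ((n : ℝ) * p ^ (Δ - 1))

/-- The dual norm `‖M‖*_{Δ,2}`. -/
noncomputable def cutDual (n : ℕ) (p : ℝ) (Δ : ℕ) (M : Tensor n 2) : ℝ :=
  ⨆ I : Finset (Fin n), ⨆ J : Finset (Fin n),
    |∑ x : Fin 2 → Fin n, M x * cut2 I J x| / cutNormIJ n p Δ I J

/-! ### The class S(G) -/

/-- `G' ∈ S(G)`: there is a surjection from `V(G)` onto `V(G')`, injective on each edge,
mapping the edge set of `G` onto that of `G'`. -/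
def InSclass {r : ℕ} (G G' : RGraph r) : Prop :=
  ∃ Ψ : G.V → G'.V, Function.Surjective Ψ ∧ (∀ e ∈ G.E, Set.InjOn Ψ ↑e) ∧
    G'.E = G.E.image fun e => e.image Ψ

/-- The maximum degree of the positive part `H₊` of a signed hypergraph. -/
def posDeg {r : ℕ} (H : RGraph r) (sgn : Finset H.V → Bool) : ℕ :=
  maxDegOn H (H.E.filter fun e => sgn e = true)

section Aux1

lemma prod01 {α : Type*} (s : Finset α) (f : α → ℝ) (h : ∀ a ∈ s, f a = 0 ∨ f a = 1) :
    ((∏ a ∈ s, f a = 0 ∨ ∏ a ∈ s, f a = 1) ∧ ((∏ a ∈ s, f a = 1) ↔ ∀ a ∈ s, f a = 1)) := by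
  classical
  constructor
  · by_cases hall : ∀ a ∈ s, f a = 1
    · right; exact Finset.prod_eq_one hall
    · left
      push_neg at hall
      obtain ⟨a, ha, hfa⟩ := hall
      have : f a = 0 := (h a ha).resolve_right hfa
      exact Finset.prod_eq_zero ha this
  · constructor
    · intro h1 a ha
      by_contra hfa
      have : f a = 0 := (h a ha).resolve_right hfa
      rw [Finset.prod_eq_zero ha this] at h1
      norm_num at h1
    · exact Finset.prod_eq_one

lemma eq_of_01_iff {a b : ℝ} (ha : a = 0 ∨ a = 1) (hb : b = 0 ∨ b = 1) (h : a = 1 ↔ b = 1) :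
    a = b := by
  rcases ha with ha | ha <;> rcases hb with hb | hb <;> simp_all

lemma adjSet_subset_wtSet {n r : ℕ} : adjSet n r ⊆ wtSet n r := by
  rintro A ⟨h1, h2, h3⟩
  refine ⟨h1, fun x => ?_, h3⟩
  rcases h2 x with h | h <;> rw [h] <;> norm_num

lemma convex_wtSet {n r : ℕ} : Convex ℝ (wtSet n r) := by
  rintro Q1 ⟨s1, b1, v1⟩ Q2 ⟨s2, b2, v2⟩ a b ha hb hab
  refine ⟨fun σ x => ?_, fun x => ?_, fun x hx => ?_⟩
  · simp only [Pi.add_apply, Pi.smul_apply, smul_eq_mul, s1 σ x, s2 σ x]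
  · have := b1 x; have := b2 x
    constructor
    · simp only [Pi.add_apply, Pi.smul_apply, smul_eq_mul]
      nlinarith
    · simp only [Pi.add_apply, Pi.smul_apply, smul_eq_mul]
      nlinarith
  · simp only [Pi.add_apply, Pi.smul_apply, smul_eq_mul, v1 x hx, v2 x hx, mul_zero, add_zero]

lemma convexHull_subset_wtSet {n r : ℕ} {Cs : Set (Tensor n r)} (h : Cs ⊆ adjSet n r) :
    convexHull ℝ Cs ⊆ wtSet n r :=
  convexHull_min (h.trans adjSet_subset_wtSet) convex_wtSet

lemma setEval_sum {n r : ℕ} {ι : Type*} (t : Finset ι) (w : ι → ℝ) (z : ι → Tensor n r)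
    (I : {I : Finset (Fin n) // I.card = r}) :
    setEval (∑ i ∈ t, w i • z i) I = ∑ i ∈ t, w i * setEval (z i) I := by
  simp [setEval, Finset.sum_apply, Pi.smul_apply, smul_eq_mul]

lemma edgeEval_sum {n r : ℕ} {V : Type} [DecidableEq V] {ι : Type*} (t : Finset ι)
    (w : ι → ℝ) (z : ι → Tensor n r) (φ : V → Fin n) (e : Finset V) :
    edgeEval (∑ i ∈ t, w i • z i) φ e = ∑ i ∈ t, w i * edgeEval (z i) φ e := by
  unfold edgeEval
  split_ifs with h
  · exact setEval_sum t w z _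
  · simp

lemma edgeEval_congr {n r : ℕ} {V : Type} [DecidableEq V] (Z : Tensor n r)
    {φ₁ φ₂ : V → Fin n} {e : Finset V} (h : e.image φ₁ = e.image φ₂) :
    edgeEval Z φ₁ e = edgeEval Z φ₂ e := by
  unfold edgeEval
  simp only [h]

lemma edgeEval_mem01 {n r : ℕ} {V : Type} [DecidableEq V] {Z : Tensor n r}
    (hZ : Z ∈ wtSet n r) (φ : V → Fin n) (e : Finset V) :
    0 ≤ edgeEval Z φ e ∧ edgeEval Z φ e ≤ 1 := by
  unfold edgeEval
  split_ifs with h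
  · exact hZ.2.1 _
  · norm_num

lemma edgeEval_01 {n r : ℕ} {V : Type} [DecidableEq V] {Z : Tensor n r}
    (hZ : Z ∈ adjSet n r) (φ : V → Fin n) (e : Finset V) :
    edgeEval Z φ e = 0 ∨ edgeEval Z φ e = 1 := by
  unfold edgeEval
  split_ifs with h
  · exact hZ.2.1 _
  · left; rfl

lemma edgeEval_eq_comp {n r : ℕ} {V : Type} [DecidableEq V] (Z : Tensor n r)
    (hsym : ∀ (σ : Equiv.Perm (Fin r)) (x : Fin r → Fin n), Z (x ∘ σ) = Z x)
    (hvan : ∀ x, ¬Function.Injective x → Z x = 0)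
    (e : Finset V) (hcard : e.card = r) (k : Fin r → V) (hk : Function.Injective k)
    (hmem : ∀ i, k i ∈ e) (φ : V → Fin n) :
    edgeEval Z φ e = Z (φ ∘ k) := by
  classical
  have himg : Finset.image k Finset.univ = e := by
    apply Finset.eq_of_subset_of_card_le
    · intro v hv
      simp only [Finset.mem_image] at hv
      obtain ⟨i, _, rfl⟩ := hv
      exact hmem i
    · rw [Finset.card_image_of_injective _ hk, Finset.card_univ, Fintype.card_fin, hcard]
  have himg2 : e.image φ = Finset.image (φ ∘ k) Finset.univ := by
    rw [← himg, Finset.image_image]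
  by_cases hinj : Function.Injective (φ ∘ k)
  · have hc : (e.image φ).card = r := by
      rw [himg2, Finset.card_image_of_injective _ hinj, Finset.card_univ, Fintype.card_fin]
    rw [edgeEval, dif_pos hc]
    set I : {I : Finset (Fin n) // I.card = r} := ⟨e.image φ, hc⟩ with hI
    set x₀ : Fin r → Fin n := fun j => ((I.1.orderIsoOfFin I.2) j).1 with hx₀
    have hwmem : ∀ j, φ (k j) ∈ I.1 := by
      intro j
      simp only [hI, Finset.mem_image]
      exact ⟨k j, hmem j, rfl⟩
    set w : Fin r → {a // a ∈ I.1} := fun j => ⟨φ (k j), hwmem j⟩ with hw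
    have hwb : Function.Bijective w := by
      rw [Fintype.bijective_iff_injective_and_card]
      constructor
      · intro j1 j2 hj
        apply hinj
        simpa [hw, Subtype.ext_iff] using hj
      · rw [Fintype.card_fin, Fintype.card_coe]
        exact I.2.symm
    set σ : Equiv.Perm (Fin r) :=
      (Equiv.ofBijective w hwb).trans (I.1.orderIsoOfFin I.2).toEquiv.symm with hσ
    have hcomp : x₀ ∘ σ = φ ∘ k := by
      funext j
      have hwj : (I.1.orderIsoOfFin I.2).toEquiv (σ j) = w j := by
        simp only [hσ, Equiv.trans_apply, Equiv.apply_symm_apply]; rfl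
      calc x₀ (σ j) = ((I.1.orderIsoOfFin I.2).toEquiv (σ j)).1 := rfl
        _ = (w j).1 := by rw [hwj]
        _ = φ (k j) := rfl
    rw [setEval]
    rw [← hsym σ x₀, hcomp]
  · have hZ0 : Z (φ ∘ k) = 0 := hvan _ hinj
    rw [hZ0, edgeEval]
    rw [dif_neg]
    intro hc
    apply hinj
    have hcc : (Finset.image (φ ∘ k) Finset.univ).card = (Finset.univ : Finset (Fin r)).card := by
      rw [← himg2, hc, Finset.card_univ, Fintype.card_fin]
    have hinj' : Set.InjOn (φ ∘ k) ↑(Finset.univ : Finset (Fin r)) := Finset.card_image_iff.mp hcc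
    rw [Finset.coe_univ] at hinj'
    exact Set.injOn_univ.mp hinj'

end Aux1

section Aux2

noncomputable def fac {n r : ℕ} {V : Type} [DecidableEq V] (sgn : Finset V → Bool)
    (Z : Tensor n r) (φ : V → Fin n) (e : Finset V) : ℝ :=
  if sgn e then edgeEval Z φ e else 1 - edgeEval Z φ e

lemma fac_sum {n r : ℕ} {V : Type} [DecidableEq V] (sgn : Finset V → Bool) {ι : Type*}
    (t : Finset ι) (w : ι → ℝ) (hw1 : ∑ i ∈ t, w i = 1) (z : ι → Tensor n r)
    (φ : V → Fin n) (e : Finset V) :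
    fac sgn (∑ i ∈ t, w i • z i) φ e = ∑ i ∈ t, w i * fac sgn (z i) φ e := by
  unfold fac
  split_ifs with h
  · exact edgeEval_sum t w z φ e
  · rw [edgeEval_sum]
    rw [Finset.sum_congr rfl (fun i _ => mul_sub (w i) 1 (edgeEval (z i) φ e)),
      Finset.sum_sub_distrib, ← Finset.sum_mul, hw1]
    ring

lemma fac_mem01 {n r : ℕ} {V : Type} [DecidableEq V] {sgn : Finset V → Bool} {Z : Tensor n r}
    (hZ : Z ∈ wtSet n r) (φ : V → Fin n) (e : Finset V) :
    0 ≤ fac sgn Z φ e ∧ fac sgn Z φ e ≤ 1 := by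
  have := edgeEval_mem01 hZ φ e
  unfold fac
  split_ifs with h
  · exact this
  · constructor <;> linarith [this.1, this.2]

lemma fac_01 {n r : ℕ} {V : Type} [DecidableEq V] {sgn : Finset V → Bool} {Z : Tensor n r}
    (hZ : Z ∈ adjSet n r) (φ : V → Fin n) (e : Finset V) :
    fac sgn Z φ e = 0 ∨ fac sgn Z φ e = 1 := by
  have := edgeEval_01 hZ φ e
  unfold fac
  split_ifs with h
  · exact this
  · rcases this with h0 | h1
    · right; rw [h0]; ring
    · left; rw [h1]; ring

lemma fac_congr {n r : ℕ} {V : Type} [DecidableEq V] (sgn : Finset V → Bool) (Z : Tensor n r)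
    {φ₁ φ₂ : V → Fin n} {e : Finset V} (h : e.image φ₁ = e.image φ₂) :
    fac sgn Z φ₁ e = fac sgn Z φ₂ e := by
  unfold fac
  rw [edgeEval_congr Z h]

/-- Splitting of assignments along an edge. -/
noncomputable def splitV {V : Type} [DecidableEq V] [Fintype V] (n r : ℕ) (e : Finset V)
    (k : Fin r → V) (k' : Fin r ≃ {v : V // v ∈ e}) (hk : ∀ i, (k' i : V) = k i) :
    (V → Fin n) ≃ (Fin r → Fin n) × ({v : V // v ∉ e} → Fin n) where
  toFun φ := (fun i => φ (k i), fun v => φ v.1)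
  invFun q := fun v => if h : v ∈ e then q.1 (k'.symm ⟨v, h⟩) else q.2 ⟨v, h⟩
  left_inv φ := by
    funext v
    by_cases h : v ∈ e
    · simp only [dif_pos h]
      rw [← hk, Equiv.apply_symm_apply]
    · simp only [dif_neg h]
  right_inv q := by
    ext i
    · have hm : k i ∈ e := by rw [← hk]; exact (k' i).2
      simp only [dif_pos hm]
      congr 1
      have : (⟨k i, hm⟩ : {v // v ∈ e}) = k' i := Subtype.ext (hk i).symm
      rw [this, Equiv.symm_apply_apply]
    · simp only [dif_neg i.2]

lemma splitV_symm_k {V : Type} [DecidableEq V] [Fintype V] (n r : ℕ) (e : Finset V)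
    (k : Fin r → V) (k' : Fin r ≃ {v : V // v ∈ e}) (hk : ∀ i, (k' i : V) = k i)
    (q : (Fin r → Fin n) × ({v : V // v ∉ e} → Fin n)) (i : Fin r) :
    (splitV n r e k k' hk).symm q (k i) = q.1 i := by
  have hm : k i ∈ e := by rw [← hk]; exact (k' i).2
  show (if h : k i ∈ e then q.1 (k'.symm ⟨k i, h⟩) else q.2 ⟨k i, h⟩) = q.1 i
  rw [dif_pos hm]
  congr 1
  have : (⟨k i, hm⟩ : {v // v ∈ e}) = k' i := Subtype.ext (hk i).symm
  rw [this, Equiv.symm_apply_apply]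

lemma splitV_symm_nmem {V : Type} [DecidableEq V] [Fintype V] (n r : ℕ) (e : Finset V)
    (k : Fin r → V) (k' : Fin r ≃ {v : V // v ∈ e}) (hk : ∀ i, (k' i : V) = k i)
    (q : (Fin r → Fin n) × ({v : V // v ∉ e} → Fin n)) (v : V) (h : v ∉ e) :
    (splitV n r e k k' hk).symm q v = q.2 ⟨v, h⟩ := by
  show (if h' : v ∈ e then q.1 (k'.symm ⟨v, h'⟩) else q.2 ⟨v, h'⟩) = q.2 ⟨v, h⟩
  rw [dif_neg h]

/-- Homomorphism count over an edge set with a total collection. -/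
noncomputable def Gm {n r : ℕ} (H : RGraph r) (sgn : Finset H.V → Bool)
    (E₁ : Finset (Finset H.V)) (c : Finset H.V → Tensor n r) : ℝ :=
  ∑ φ : H.V → Fin n, ∏ e ∈ E₁, fac sgn (c e) φ e

lemma Gm_congr {n r : ℕ} (H : RGraph r) (sgn : Finset H.V → Bool)
    {E₁ : Finset (Finset H.V)} {c c' : Finset H.V → Tensor n r}
    (h : ∀ e ∈ E₁, c e = c' e) : Gm H sgn E₁ c = Gm H sgn E₁ c' :=
  Finset.sum_congr rfl fun φ _ => Finset.prod_congr rfl fun e he => by rw [h e he]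

/-- Multilinear expansion: a bound for Boolean collections transfers to convex hulls. -/
lemma expand {n r : ℕ} (H : RGraph r) (sgn : Finset H.V → Bool) (Cs : Set (Tensor n r)) :
    ∀ (F : Finset (Finset H.V)) (g : (H.V → Fin n) → ℝ) (c : Finset H.V → Tensor n r)
      (M : ℝ),
    (∀ e ∈ F, c e ∈ convexHull ℝ Cs) →
    (∀ A : Finset H.V → Tensor n r, (∀ e ∈ F, A e ∈ Cs) →
      |∑ φ : H.V → Fin n, g φ * ∏ e ∈ F, fac sgn (A e) φ e| ≤ M) →
    |∑ φ : H.V → Fin n, g φ * ∏ e ∈ F, fac sgn (c e) φ e| ≤ M := by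
  intro F
  induction F using Finset.induction_on with
  | empty =>
    intro g c M _ hA
    exact hA c (by simp)
  | @insert a F ha ih =>
    intro g c M hc hA
    have hmem : c a ∈ convexHull ℝ Cs := hc a (Finset.mem_insert_self a F)
    rw [_root_.convexHull_eq] at hmem
    obtain ⟨ι, t, w, z, hw0, hw1, hz, hcm⟩ := hmem
    have hca : c a = ∑ i ∈ t, w i • z i := by
      rw [← hcm, Finset.centerMass_eq_of_sum_1 _ _ hw1]
    have key : (∑ φ : H.V → Fin n, g φ * ∏ e ∈ insert a F, fac sgn (c e) φ e)
        = ∑ i ∈ t, w i *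
          ∑ φ : H.V → Fin n, (g φ * fac sgn (z i) φ a) * ∏ e ∈ F, fac sgn (c e) φ e := by
      have h1 : ∀ φ : H.V → Fin n, g φ * ∏ e ∈ insert a F, fac sgn (c e) φ e
          = ∑ i ∈ t, w i * ((g φ * fac sgn (z i) φ a) * ∏ e ∈ F, fac sgn (c e) φ e) := by
        intro φ
        rw [Finset.prod_insert ha, hca, fac_sum sgn t w hw1 z φ a, Finset.sum_mul,
          Finset.mul_sum]
        exact Finset.sum_congr rfl fun i _ => by ring
      rw [Finset.sum_congr rfl fun φ _ => h1 φ, Finset.sum_comm]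
      exact Finset.sum_congr rfl fun i _ => (Finset.mul_sum _ _ _).symm
    rw [key]
    have hper : ∀ i ∈ t,
        |∑ φ : H.V → Fin n, (g φ * fac sgn (z i) φ a) * ∏ e ∈ F, fac sgn (c e) φ e| ≤ M := by
      intro i hi
      apply ih (fun φ => g φ * fac sgn (z i) φ a) c M
        (fun e he => hc e (Finset.mem_insert_of_mem he))
      intro A hAF
      have hval : (∑ φ : H.V → Fin n,
            g φ * ∏ e ∈ insert a F, fac sgn ((Function.update A a (z i)) e) φ e)
          = ∑ φ : H.V → Fin n, (g φ * fac sgn (z i) φ a) * ∏ e ∈ F, fac sgn (A e) φ e := by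
        refine Finset.sum_congr rfl fun φ _ => ?_
        have hFprod : (∏ e ∈ F, fac sgn ((Function.update A a (z i)) e) φ e)
            = ∏ e ∈ F, fac sgn (A e) φ e := by
          refine Finset.prod_congr rfl fun e he => ?_
          rw [Function.update_apply, if_neg (fun h : _ = a => ha (h ▸ he))]
        rw [Finset.prod_insert ha, Function.update_self, hFprod]
        ring
      have hup : ∀ e ∈ insert a F, (Function.update A a (z i)) e ∈ Cs := by
        intro e he
        rcases Finset.mem_insert.mp he with rfl | heF
        · rw [Function.update_self]; exact hz i hi
        · rw [Function.update_apply, if_neg (fun h : _ = a => ha (h ▸ heF))]; exact hAF e heF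
      have := hA _ hup
      rwa [hval] at this
    calc |∑ i ∈ t, w i *
          ∑ φ : H.V → Fin n, (g φ * fac sgn (z i) φ a) * ∏ e ∈ F, fac sgn (c e) φ e|
        ≤ ∑ i ∈ t, |w i *
          ∑ φ : H.V → Fin n, (g φ * fac sgn (z i) φ a) * ∏ e ∈ F, fac sgn (c e) φ e| :=
          Finset.abs_sum_le_sum_abs _ _
      _ ≤ ∑ i ∈ t, w i * M := by
          refine Finset.sum_le_sum fun i hi => ?_
          rw [abs_mul, abs_of_nonneg (hw0 i hi)]
          exact mul_le_mul_of_nonneg_left (hper i hi) (hw0 i hi)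
      _ = M := by rw [← Finset.sum_mul, hw1, one_mul]

end Aux2

section Aux3

lemma csupr_prop_neg {P : Prop} (h : ¬P) (v : P → ℝ) : (⨆ h' : P, v h') = 0 := by
  have : IsEmpty P := ⟨h⟩
  rw [iSup, Set.range_eq_empty, Real.sSup_empty]

lemma testFun_01 {n r : ℕ} (Bw : WBase r) (f : Factors n r) (x : Fin r → Fin n) :
    testFun Bw f x = 0 ∨ testFun Bw f x = 1 :=
  (prod01 _ _ (fun b _ => by by_cases h : f b (fun v => x v.1) <;> simp [h])).1

lemma testFun_eq_one_iff {n r : ℕ} (Bw : WBase r) (f : Factors n r) (x : Fin r → Fin n) :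
    testFun Bw f x = 1 ↔ ∀ b ∈ Bw.B, f b (fun v => x v.1) = true := by
  show (∏ b ∈ Bw.B, if f b (fun v => x v.1) then (1:ℝ) else 0) = 1 ↔ _
  rw [(prod01 Bw.B _ (fun b _ => by by_cases h : f b (fun v => x v.1) <;> simp [h])).2]
  constructor
  · intro h b hb
    have := h b hb
    by_contra hf
    rw [if_neg hf] at this
    norm_num at this
  · intro h b hb
    rw [if_pos (h b hb)]

lemma testFun_nonneg {n r : ℕ} (Bw : WBase r) (f : Factors n r) (x : Fin r → Fin n) :
    0 ≤ testFun Bw f x := by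
  rcases testFun_01 Bw f x with h | h <;> rw [h] <;> norm_num

lemma testNorm_nonneg {n r : ℕ} (p : ℝ) (Bw : WBase r) (f : Factors n r) :
    0 ≤ testNorm p Bw f :=
  le_trans (Finset.sum_nonneg fun x _ => abs_nonneg _) (le_max_left _ _)

lemma dualNorm_nonneg {n r : ℕ} (p : ℝ) (Bw : WBase r) (Z : Tensor n r) :
    0 ≤ dualNorm n p Bw Z := by
  apply Real.iSup_nonneg
  intro f
  split_ifs with h
  · exact div_nonneg (abs_nonneg _) (testNorm_nonneg p Bw f)
  · exact le_refl 0

lemma facNorm1_nonneg {n r : ℕ} (f : Factors n r) (b : Finset (Fin r)) :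
    0 ≤ facNorm1 f b := Nat.cast_nonneg _

lemma pairing {n r : ℕ} (p : ℝ) (Bw : WBase r) (Z : Tensor n r) (f : Factors n r) :
    |∑ x : Fin r → Fin n, Z x * testFun Bw f x| ≤ dualNorm n p Bw Z * testNorm p Bw f := by
  by_cases hT : ∃ x, testFun Bw f x ≠ 0
  · have htn1 : 1 ≤ testNorm p Bw f := by
      obtain ⟨x, hx⟩ := hT
      have hx1 : testFun Bw f x = 1 := (testFun_01 Bw f x).resolve_left hx
      refine le_trans ?_ (le_max_left _ _)
      calc (1:ℝ) = |testFun Bw f x| := by rw [hx1]; norm_num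
        _ ≤ ∑ x' : Fin r → Fin n, |testFun Bw f x'| :=
          Finset.single_le_sum (f := fun x' : Fin r → Fin n => |testFun Bw f x'|)
            (fun _ _ => abs_nonneg _) (Finset.mem_univ x)
    have hb : BddAbove (Set.range fun f' : Factors n r =>
        if ∃ x, testFun Bw f' x ≠ 0 then
          |∑ x : Fin r → Fin n, Z x * testFun Bw f' x| / testNorm p Bw f' else 0) :=
      Set.Finite.bddAbove (Set.finite_range _)
    have hle : |∑ x : Fin r → Fin n, Z x * testFun Bw f x| / testNorm p Bw f
        ≤ dualNorm n p Bw Z := by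
      have := le_ciSup hb f
      rw [if_pos hT] at this
      exact this
    have htn0 : (0:ℝ) < testNorm p Bw f := lt_of_lt_of_le one_pos htn1
    calc |∑ x : Fin r → Fin n, Z x * testFun Bw f x|
        = |∑ x : Fin r → Fin n, Z x * testFun Bw f x| / testNorm p Bw f * testNorm p Bw f := by
          field_simp
      _ ≤ dualNorm n p Bw Z * testNorm p Bw f :=
          mul_le_mul_of_nonneg_right hle (le_of_lt htn0)
  · push_neg at hT
    have h0 : ∑ x : Fin r → Fin n, Z x * testFun Bw f x = 0 :=
      Finset.sum_eq_zero fun x _ => by rw [hT x, mul_zero]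
    rw [h0, abs_zero]
    exact mul_nonneg (dualNorm_nonneg p Bw Z) (testNorm_nonneg p Bw f)

lemma testNorm_le {n r : ℕ} (p : ℝ) (hp : 0 ≤ p) (Bw : WBase r) (f : Factors n r) :
    testNorm p Bw f ≤ (∑ x : Fin r → Fin n, |testFun Bw f x|)
      + ∑ b ∈ Bw.B, (n : ℝ) ^ (r - b.card) * p ^ (Bw.dstar - Bw.d b) * facNorm1 f b := by
  have hterm : ∀ b ∈ Bw.B, (0:ℝ) ≤ (n : ℝ) ^ (r - b.card) * p ^ (Bw.dstar - Bw.d b) * facNorm1 f b := by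
    intro b _
    have := facNorm1_nonneg (n := n) f b
    positivity
  have hsum0 : (0:ℝ) ≤ ∑ b ∈ Bw.B, (n : ℝ) ^ (r - b.card) * p ^ (Bw.dstar - Bw.d b) * facNorm1 f b :=
    Finset.sum_nonneg hterm
  apply max_le
  · exact le_add_of_nonneg_right hsum0
  · refine le_trans (Real.iSup_le (fun b => ?_) hsum0) (le_add_of_nonneg_left
      (Finset.sum_nonneg fun x _ => abs_nonneg _))
    by_cases hb : b ∈ Bw.B
    · rw [ciSup_pos hb]
      exact Finset.single_le_sum hterm hb
    · rw [csupr_prop_neg hb]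
      exact hsum0

lemma pairing_conv {n r : ℕ} {H : RGraph r} (S : BaseSystem H) (E₀ : Finset (Finset H.V))
    (p ε : ℝ) (Cs : Set (Tensor n r))
    (hdiam : ∀ A₁ ∈ Cs, ∀ A₂ ∈ Cs,
      bsDualNorm S E₀ p (fun x => A₁ x - A₂ x) ≤ ε * p)
    (e0 : {e // e ∈ H.E}) {X Y : Tensor n r}
    (hX : X ∈ convexHull ℝ Cs) (hY : Y ∈ convexHull ℝ Cs) (f : Factors n r) :
    |∑ x : Fin r → Fin n, (X x - Y x) * testFun (S.wb E₀ e0) f x|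
      ≤ ε * p * testNorm p (S.wb E₀ e0) f := by
  classical
  set Bw := S.wb E₀ e0 with hBw
  set tn := testNorm p Bw f with htn
  have htn0 : 0 ≤ tn := testNorm_nonneg p Bw f
  set L0 : Tensor n r → ℝ := fun Z => ∑ x : Fin r → Fin n, Z x * testFun Bw f x with hL0
  have hAB : ∀ A₁ ∈ Cs, ∀ A₂ ∈ Cs, |L0 A₁ - L0 A₂| ≤ ε * p * tn := by
    intro A₁ h₁ A₂ h₂
    have hsub : L0 A₁ - L0 A₂ = ∑ x : Fin r → Fin n, (A₁ x - A₂ x) * testFun Bw f x := by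
      rw [hL0]
      simp only []
      rw [← Finset.sum_sub_distrib]
      exact Finset.sum_congr rfl fun x _ => by ring
    rw [hsub]
    have h1 := pairing p Bw (fun x => A₁ x - A₂ x) f
    have h2 : dualNorm n p Bw (fun x => A₁ x - A₂ x)
        ≤ bsDualNorm S E₀ p (fun x => A₁ x - A₂ x) :=
      le_ciSup (f := fun e : {e // e ∈ H.E} => dualNorm n p (S.wb E₀ e) (fun x => A₁ x - A₂ x))
        (Set.Finite.bddAbove (Set.finite_range _)) e0
    calc |∑ x : Fin r → Fin n, (A₁ x - A₂ x) * testFun Bw f x|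
        ≤ dualNorm n p Bw (fun x => A₁ x - A₂ x) * tn := h1
      _ ≤ ε * p * tn :=
          mul_le_mul_of_nonneg_right (le_trans h2 (hdiam A₁ h₁ A₂ h₂)) htn0
  rw [_root_.convexHull_eq] at hX hY
  obtain ⟨ι₁, t, w, z, hw0, hw1, hz, hXc⟩ := hX
  obtain ⟨ι₂, s, u, y, hu0, hu1, hy, hYc⟩ := hY
  have hXs : X = ∑ i ∈ t, w i • z i := by
    rw [← hXc, Finset.centerMass_eq_of_sum_1 _ _ hw1]
  have hYs : Y = ∑ j ∈ s, u j • y j := by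
    rw [← hYc, Finset.centerMass_eq_of_sum_1 _ _ hu1]
  have hlin : ∀ {ι' : Type} (t' : Finset ι') (w' : ι' → ℝ) (z' : ι' → Tensor n r),
      L0 (∑ i ∈ t', w' i • z' i) = ∑ i ∈ t', w' i * L0 (z' i) := by
    intro ι' t' w' z'
    rw [hL0]
    simp only []
    have hpt : ∀ x : Fin r → Fin n, (∑ i ∈ t', w' i • z' i) x * testFun Bw f x
        = ∑ i ∈ t', w' i * (z' i x * testFun Bw f x) := by
      intro x
      rw [Finset.sum_apply, Finset.sum_mul]
      refine Finset.sum_congr rfl fun i _ => ?_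
      simp [Pi.smul_apply, smul_eq_mul, mul_assoc]
    rw [Finset.sum_congr rfl fun x _ => hpt x, Finset.sum_comm]
    exact Finset.sum_congr rfl fun i _ => (Finset.mul_sum _ _ _).symm
  have inner : ∀ a : ℝ, ∑ j ∈ s, u j * (a - L0 (y j)) = a - ∑ j ∈ s, u j * L0 (y j) := by
    intro a
    rw [Finset.sum_congr rfl fun j _ => mul_sub (u j) a (L0 (y j)), Finset.sum_sub_distrib,
      ← Finset.sum_mul, hu1, one_mul]
  have keyR : (∑ i ∈ t, ∑ j ∈ s, (w i * u j) * (L0 (z i) - L0 (y j)))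
      = L0 X - L0 Y := by
    have hper : ∀ i, ∑ j ∈ s, (w i * u j) * (L0 (z i) - L0 (y j))
        = w i * (L0 (z i) - ∑ j ∈ s, u j * L0 (y j)) := by
      intro i
      rw [← inner (L0 (z i)), Finset.mul_sum]
      exact Finset.sum_congr rfl fun j _ => by ring
    rw [Finset.sum_congr rfl fun i _ => hper i]
    rw [Finset.sum_congr rfl fun i (_ : i ∈ t) => mul_sub (w i) (L0 (z i)) _,
      Finset.sum_sub_distrib, ← Finset.sum_mul, hw1, one_mul, hXs, hYs, hlin t w z, hlin s u y]
  have hLHS : ∑ x : Fin r → Fin n, (X x - Y x) * testFun Bw f x = L0 X - L0 Y := by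
    rw [hL0]
    simp only []
    rw [← Finset.sum_sub_distrib]
    exact Finset.sum_congr rfl fun x _ => by ring
  rw [hLHS, ← keyR]
  calc |∑ i ∈ t, ∑ j ∈ s, (w i * u j) * (L0 (z i) - L0 (y j))|
      ≤ ∑ i ∈ t, |∑ j ∈ s, (w i * u j) * (L0 (z i) - L0 (y j))| := Finset.abs_sum_le_sum_abs _ _
    _ ≤ ∑ i ∈ t, ∑ j ∈ s, |(w i * u j) * (L0 (z i) - L0 (y j))| :=
        Finset.sum_le_sum fun i _ => Finset.abs_sum_le_sum_abs _ _
    _ ≤ ∑ i ∈ t, ∑ j ∈ s, (w i * u j) * (ε * p * tn) := by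
        refine Finset.sum_le_sum fun i hi => Finset.sum_le_sum fun j hj => ?_
        rw [abs_mul, abs_of_nonneg (mul_nonneg (hw0 i hi) (hu0 j hj))]
        exact mul_le_mul_of_nonneg_left (hAB (z i) (hz i hi) (y j) (hy j hj))
          (mul_nonneg (hw0 i hi) (hu0 j hj))
    _ = ε * p * tn := by
        have hper2 : ∀ i, ∑ j ∈ s, (w i * u j) * (ε * p * tn) = w i * (ε * p * tn) := by
          intro i
          rw [← Finset.sum_mul, ← Finset.mul_sum, hu1, mul_one]
        rw [Finset.sum_congr rfl fun i _ => hper2 i, ← Finset.sum_mul, hw1, one_mul]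

end Aux3

section Aux4

lemma ite_bool_eq_true_iff (P : Prop) [Decidable P] :
    (if P then true else false) = true ↔ P := by
  split_ifs with h <;> simp [h]

lemma shomE_eq_Gm {n r : ℕ} (H : RGraph r) (sgn : Finset H.V → Bool)
    (E₀ : Finset (Finset H.V)) (Q : Tensor n r) :
    shomE H sgn E₀ Q = Gm H sgn E₀ (fun _ => Q) := rfl

lemma shomColl_eq_Gm {n r : ℕ} (H : RGraph r) (sgn : Finset H.V → Bool)
    (P : {e // e ∈ H.E} → Tensor n r) (W : Tensor n r) :
    shomColl H sgn P = Gm H sgn H.E (fun e => if h : e ∈ H.E then P ⟨e, h⟩ else W) := by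
  unfold shomColl Gm
  refine Finset.sum_congr rfl fun φ _ => ?_
  rw [← Finset.prod_coe_sort H.E
    (fun e => fac sgn (if h : e ∈ H.E then P ⟨e, h⟩ else W) φ e)]
  refine Finset.prod_congr rfl fun e _ => ?_
  show (if sgn e.1 then edgeEval (P e) φ e.1 else 1 - edgeEval (P e) φ e.1)
      = fac sgn (if h : (e : Finset H.V) ∈ H.E then P ⟨e.1, h⟩ else W) φ e.1
  rw [dif_pos e.2, Subtype.coe_eta]
  rfl

noncomputable def cst (r m : ℕ) : ℕ → ℝ
  | 0 => 0
  | (k+1) => ((m : ℝ) + 1) * (1 + 2 ^ r) * (1 + cst r m k)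

lemma cst_nonneg (r m k : ℕ) : 0 ≤ cst r m k := by
  induction k with
  | zero => exact le_refl 0
  | succ k ih =>
    show (0:ℝ) ≤ ((m : ℝ) + 1) * (1 + 2 ^ r) * (1 + cst r m k)
    positivity

lemma master {n r : ℕ} (H : RGraph r) (sgn : Finset H.V → Bool) (p : ℝ)
    (hn : 1 ≤ n) (hp0 : 0 < p) (hp1 : p < 1)
    (S : BaseSystem H) (hS : S.Good) (ε : ℝ) (hε0 : 0 < ε) (hε1 : ε ≤ 1)
    (Cs : Set (Tensor n r)) (hCs : Cs ⊆ adjSet n r)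
    (hdiam : ∀ A₁ ∈ Cs, ∀ A₂ ∈ Cs,
      bsDualNorm S (H.E.filter fun e => sgn e = true) p (fun x => A₁ x - A₂ x) ≤ ε * p)
    (L : ℝ) (hL : 1 ≤ L) (Q₀ : Tensor n r) (hQ₀m : Q₀ ∈ convexHull ℝ Cs)
    (hQ₀ : ∀ E' ⊆ H.E, E' ≠ H.E →
      shomE H sgn E' Q₀ ≤ L * (n : ℝ) ^ Fintype.card H.V *
        p ^ (E'.filter fun e => sgn e = true).card) :
    ∀ (k : ℕ) (E' : Finset (Finset H.V)), E' ⊆ H.E → E'.card ≤ k →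
      ∀ c c' : Finset H.V → Tensor n r,
        (∀ e ∈ E', c e ∈ convexHull ℝ Cs) → (∀ e ∈ E', c' e ∈ convexHull ℝ Cs) →
        |Gm H sgn E' c - Gm H sgn E' c'| ≤ cst r H.E.card k *
          (L * ε * (n : ℝ) ^ Fintype.card H.V *
            p ^ (E'.filter fun e => sgn e = true).card) := by
  intro k
  induction k with
  | zero =>
    intro E' hE'sub hcard c c' _ _
    have hE : E' = ∅ := Finset.card_eq_zero.mp (Nat.le_zero.mp hcard)
    subst hE
    show |Gm H sgn ∅ c - Gm H sgn ∅ c'| ≤ cst r H.E.card 0 * _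
    have h1 : Gm H sgn ∅ c = Gm H sgn ∅ c' := Gm_congr H sgn (by simp)
    rw [h1, sub_self, abs_zero]
    show (0:ℝ) ≤ 0 * _
    rw [zero_mul]
  | succ k ih =>
    intro E' hE'sub hcard c c' hc hc'
    set N : ℝ := (n : ℝ) ^ Fintype.card H.V with hN
    set pos : Finset (Finset H.V) := H.E.filter (fun e => sgn e = true) with hpos
    have hnn : 0 < n := hn
    have hn0 : (0:ℝ) < (n:ℝ) := by exact_mod_cast hnn
    have hN0 : 0 < N := by rw [hN]; positivity
    have hcst0 : 0 ≤ cst r H.E.card k := cst_nonneg r H.E.card k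
    have hL0 : (0:ℝ) < L := lt_of_lt_of_le one_pos hL
    -- The single-edge swap bound.
    have swap : ∀ e0 ∈ E', ∀ (c₁ c₂ : Finset H.V → Tensor n r),
        (∀ e ∈ E', c₁ e ∈ convexHull ℝ Cs) → (∀ e ∈ E', c₂ e ∈ convexHull ℝ Cs) →
        (∀ e ∈ E', e ≠ e0 → c₁ e = c₂ e) →
        |Gm H sgn E' c₁ - Gm H sgn E' c₂| ≤ (1 + 2 ^ r) * (1 + cst r H.E.card k) *
          (L * ε * N * p ^ (E'.filter fun e => sgn e = true).card) := by
      intro e0 he0 c₁ c₂ hc₁ hc₂ hagree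
      have he0H : e0 ∈ H.E := hE'sub he0
      set eS : {e // e ∈ H.E} := ⟨e0, he0H⟩ with heS
      set kk : Fin r → H.V := S.emb eS with hkk
      have hkinj : Function.Injective kk := S.emb_inj eS
      have hkmem : ∀ i, kk i ∈ e0 := fun i => S.emb_mem eS i
      have hcard0 : e0.card = r := H.card_edge e0 he0H
      have hbij : Function.Bijective (fun i => (⟨kk i, hkmem i⟩ : {v' : H.V // v' ∈ e0})) := by
        rw [Fintype.bijective_iff_injective_and_card]
        constructor
        · intro i j hij
          exact hkinj (congrArg Subtype.val hij)
        · rw [Fintype.card_fin, Fintype.card_coe, hcard0]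
      set k' : Fin r ≃ {v' : H.V // v' ∈ e0} := Equiv.ofBijective _ hbij with hk'def
      have hk' : ∀ i, (k' i : H.V) = kk i := fun i => rfl
      set Φ := splitV (V := H.V) n r e0 kk k' hk' with hΦ
      set E₁ : Finset (Finset H.V) := E'.erase e0 with hE₁
      have hE₁sub : E₁ ⊆ H.E := (Finset.erase_subset _ _).trans hE'sub
      have hE₁card : E₁.card ≤ k := by
        have h1 : E₁.card = E'.card - 1 := by
          rw [hE₁]; exact Finset.card_erase_of_mem he0
        have h2 : 1 ≤ E'.card := Finset.card_pos.mpr ⟨e0, he0⟩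
        omega
      set Bw := S.wb pos eS with hBw
      set X := c₁ e0 with hXdef
      set Y := c₂ e0 with hYdef
      set D : Tensor n r := fun x => X x - Y x with hD
      have hXw : X ∈ wtSet n r := convexHull_subset_wtSet hCs (hc₁ e0 he0)
      have hYw : Y ∈ wtSet n r := convexHull_subset_wtSet hCs (hc₂ e0 he0)
      set sg : ℝ := if sgn e0 then 1 else -1 with hsgdef
      have hsg : |sg| = 1 := by rw [hsgdef]; split_ifs <;> norm_num
      -- Step A: extract the swapped edge.
      have stepA : Gm H sgn E' c₁ - Gm H sgn E' c₂
          = ∑ φ : H.V → Fin n, (sg * D (φ ∘ kk)) * ∏ e ∈ E₁, fac sgn (c₁ e) φ e := by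
        unfold Gm
        rw [← Finset.sum_sub_distrib]
        refine Finset.sum_congr rfl fun φ _ => ?_
        rw [← Finset.mul_prod_erase E' _ he0, ← Finset.mul_prod_erase E' _ he0]
        have hprodeq : (∏ e ∈ E'.erase e0, fac sgn (c₂ e) φ e)
            = ∏ e ∈ E'.erase e0, fac sgn (c₁ e) φ e :=
          Finset.prod_congr rfl fun e he => by
            rw [hagree e (Finset.mem_of_mem_erase he) (Finset.ne_of_mem_erase he)]
        rw [hprodeq, ← sub_mul]
        have hX' : edgeEval X φ e0 = X (φ ∘ kk) :=
          edgeEval_eq_comp X hXw.1 hXw.2.2 e0 hcard0 kk hkinj hkmem φ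
        have hY' : edgeEval Y φ e0 = Y (φ ∘ kk) :=
          edgeEval_eq_comp Y hYw.1 hYw.2.2 e0 hcard0 kk hkinj hkmem φ
        have hfacsub : fac sgn (c₁ e0) φ e0 - fac sgn (c₂ e0) φ e0 = sg * D (φ ∘ kk) := by
          have hDval : D (φ ∘ kk) = X (φ ∘ kk) - Y (φ ∘ kk) := rfl
          unfold fac
          rw [hsgdef, hDval, ← hXdef, ← hYdef]
          split_ifs with h
          · rw [hX', hY']; ring
          · rw [hX', hY']; ring
        rw [hfacsub]
      rw [stepA]
      -- Step B: expand the remaining edges into Boolean tensors.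
      apply expand H sgn Cs E₁ (fun φ => sg * D (φ ∘ kk)) c₁ _
        (fun e he => hc₁ e (Finset.mem_of_mem_erase he))
      intro A hACs
      -- Step C: reindex and pair against test tensors.
      have hreindex : ∀ (W : (H.V → Fin n) → ℝ), (∑ φ : H.V → Fin n, W φ)
          = ∑ ψ : {v' : H.V // v' ∉ e0} → Fin n, ∑ x : Fin r → Fin n, W (Φ.symm (x, ψ)) := by
        intro W
        rw [← Equiv.sum_comp Φ.symm W, Fintype.sum_prod_type]
        exact Finset.sum_comm
      have hcompk : ∀ (x : Fin r → Fin n) (ψ : {v' : H.V // v' ∉ e0} → Fin n),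
          (Φ.symm (x, ψ)) ∘ kk = x := by
        intro x ψ
        funext i
        rw [hΦ]
        exact splitV_symm_k n r e0 kk k' hk' (x, ψ) i
      set T : ({v' : H.V // v' ∉ e0} → Fin n) → (Fin r → Fin n) → ℝ :=
        fun ψ x => ∏ e ∈ E₁, fac sgn (A e) (Φ.symm (x, ψ)) e with hT
      set ext : (b : Finset (Fin r)) → ({v : Fin r // v ∈ b} → Fin n) → (Fin r → Fin n) :=
        fun b y i => if h : i ∈ b then y ⟨i, h⟩ else ⟨0, hnn⟩ with hext
      set fψ : ({v' : H.V // v' ∉ e0} → Fin n) → Factors n r := fun ψ b y =>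
        if (∀ e ∈ E₁, e ∩ e0 ⊆ S.vimage eS b →
            fac sgn (A e) (Φ.symm (ext b y, ψ)) e = 1)
        then true else false with hfψ
      -- agreement of the truncated assignment with the full one
      have hagree2 : ∀ (b : Finset (Fin r)) (x : Fin r → Fin n)
          (ψ : {v' : H.V // v' ∉ e0} → Fin n) (e : Finset H.V),
          e ∩ e0 ⊆ S.vimage eS b →
          fac sgn (A e) (Φ.symm (ext b (fun u => x u.1), ψ)) e
            = fac sgn (A e) (Φ.symm (x, ψ)) e := by
        intro b x ψ e hsub
        apply fac_congr
        apply Finset.image_congr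
        intro v' hv'
        have hv'e : v' ∈ e := hv'
        by_cases hv0 : v' ∈ e0
        · have hvb : v' ∈ S.vimage eS b := hsub (Finset.mem_inter.mpr ⟨hv'e, hv0⟩)
          obtain ⟨i, hib, hiv⟩ := Finset.mem_image.mp hvb
          have hkiv : kk i = v' := hiv
          rw [← hkiv, hΦ, splitV_symm_k n r e0 kk k' hk' _ i,
            splitV_symm_k n r e0 kk k' hk' _ i]
          show ext b (fun u => x u.1) i = x i
          rw [hext]
          simp only [dif_pos hib]
        · rw [hΦ, splitV_symm_nmem n r e0 kk k' hk' _ v' hv0,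
            splitV_symm_nmem n r e0 kk k' hk' _ v' hv0]
      have hfiff : ∀ (ψ : {v' : H.V // v' ∉ e0} → Fin n) (x : Fin r → Fin n)
          (b : Finset (Fin r)),
          (fψ ψ b (fun u => x u.1) = true ↔
            ∀ e ∈ E₁, e ∩ e0 ⊆ S.vimage eS b → fac sgn (A e) (Φ.symm (x, ψ)) e = 1) := by
        intro ψ x b
        rw [hfψ]
        rw [ite_bool_eq_true_iff]
        constructor
        · intro h e he hsub
          rw [← hagree2 b x ψ e hsub]
          exact h e he hsub
        · intro h e he hsub
          rw [hagree2 b x ψ e hsub]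
          exact h e he hsub
      have hfac01 : ∀ (e : Finset H.V), e ∈ E₁ → ∀ (φ : H.V → Fin n),
          fac sgn (A e) φ e = 0 ∨ fac sgn (A e) φ e = 1 :=
        fun e he φ => fac_01 (hCs (hACs e he)) φ e
      have claim1 : ∀ ψ x, testFun Bw (fψ ψ) x = T ψ x := by
        intro ψ x
        apply eq_of_01_iff (testFun_01 _ _ _)
          ((prod01 E₁ _ (fun e he => hfac01 e he _)).1)
        rw [testFun_eq_one_iff, (prod01 E₁ _ (fun e he => hfac01 e he _)).2]
        constructor
        · intro h e he
          have heH : e ∈ H.E := hE₁sub he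
          have hene : e ≠ e0 := Finset.ne_of_mem_erase he
          obtain ⟨b, hbB, hbsub⟩ := (hS eS).2.2.2 e heH hene
          have hbB' : b ∈ Bw.B := hbB
          exact (hfiff ψ x b).mp (h b hbB') e he hbsub
        · intro h b hbB
          rw [hfiff]
          intro e he _
          exact h e he
      -- pairing bound per ψ
      have hpair : ∀ ψ, |∑ x : Fin r → Fin n, D x * T ψ x|
          ≤ ε * p * testNorm p Bw (fψ ψ) := by
        intro ψ
        have hpc := pairing_conv S pos p ε Cs hdiam eS (hc₁ e0 he0) (hc₂ e0 he0) (fψ ψ)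
        calc |∑ x : Fin r → Fin n, D x * T ψ x|
            = |∑ x : Fin r → Fin n, (X x - Y x) * testFun Bw (fψ ψ) x| := by
              congr 1
              exact Finset.sum_congr rfl fun x _ => by rw [claim1]
          _ ≤ ε * p * testNorm p Bw (fψ ψ) := hpc
      have hTnn : ∀ ψ x, 0 ≤ T ψ x := by
        intro ψ x
        rw [← claim1]
        exact testFun_nonneg Bw (fψ ψ) x
      have htn_le : ∀ ψ, testNorm p Bw (fψ ψ)
          ≤ (∑ x : Fin r → Fin n, T ψ x) +
            ∑ b ∈ Bw.B, (n:ℝ) ^ (r - b.card) * p ^ (Bw.dstar - Bw.d b)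
              * facNorm1 (fψ ψ) b := by
        intro ψ
        refine le_trans (testNorm_le p hp0.le Bw (fψ ψ)) ?_
        have : (∑ x : Fin r → Fin n, |testFun Bw (fψ ψ) x|)
            = ∑ x : Fin r → Fin n, T ψ x :=
          Finset.sum_congr rfl fun x _ => by
            rw [abs_of_nonneg (testFun_nonneg Bw (fψ ψ) x), claim1]
        rw [this]
      -- nonnegativity helpers
      have hpnn : (0:ℝ) ≤ p := hp0.le
      have hεnn : (0:ℝ) ≤ ε := hε0.le
      have hC10 : (0:ℝ) ≤ 1 + cst r H.E.card k := by linarith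
      have hXpos : (0:ℝ) ≤ L * ε * N * p ^ (E'.filter fun e => sgn e = true).card :=
        mul_nonneg (mul_nonneg (mul_nonneg hL0.le hεnn) hN0.le) (pow_nonneg hpnn _)
      -- Claim 4: summing the test tensors recovers the subgraph count.
      have hSa : (∑ ψ : {v' : H.V // v' ∉ e0} → Fin n, ∑ x : Fin r → Fin n, T ψ x)
          = Gm H sgn E₁ A := by
        rw [Gm, hreindex (fun φ => ∏ e ∈ E₁, fac sgn (A e) φ e)]
      -- Claim 5: counting bound for subgraphs with Boolean entries.
      have hGbound : ∀ E'', E'' ⊆ E₁ → Gm H sgn E'' A ≤ (1 + cst r H.E.card k) *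
          (L * N * p ^ (E''.filter fun e => sgn e = true).card) := by
        intro E'' hsub
        have hsubH : E'' ⊆ H.E := hsub.trans hE₁sub
        have hA1 : ∀ e ∈ E'', A e ∈ convexHull ℝ Cs :=
          fun e he => subset_convexHull ℝ Cs (hACs e (hsub he))
        have h1 := ih E'' hsubH (le_trans (Finset.card_le_card hsub) hE₁card) A
          (fun _ => Q₀) hA1 (fun _ _ => hQ₀m)
        have hne : E'' ≠ H.E := by
          intro hEE
          have he0in : e0 ∈ E'' := by rw [hEE]; exact he0H
          have h2 : e0 ∈ E₁ := hsub he0in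
          rw [hE₁] at h2
          exact Finset.notMem_erase e0 E' h2
        have h2 : Gm H sgn E'' (fun _ => Q₀) ≤ L * N *
            p ^ (E''.filter fun e => sgn e = true).card := by
          rw [← shomE_eq_Gm]
          exact hQ₀ E'' hsubH hne
        have h3 := (abs_sub_le_iff.mp h1).1
        have hQ1nn : (0:ℝ) ≤ L * N * p ^ (E''.filter fun e => sgn e = true).card :=
          mul_nonneg (mul_nonneg hL0.le hN0.le) (pow_nonneg hpnn _)
        have h4 : cst r H.E.card k *
            (L * ε * N * p ^ (E''.filter fun e => sgn e = true).card)
            ≤ cst r H.E.card k *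
              (L * N * p ^ (E''.filter fun e => sgn e = true).card) := by
          apply mul_le_mul_of_nonneg_left _ hcst0
          calc L * ε * N * p ^ (E''.filter fun e => sgn e = true).card
              = ε * (L * N * p ^ (E''.filter fun e => sgn e = true).card) := by ring
            _ ≤ 1 * (L * N * p ^ (E''.filter fun e => sgn e = true).card) :=
                mul_le_mul_of_nonneg_right hε1 hQ1nn
            _ = L * N * p ^ (E''.filter fun e => sgn e = true).card := one_mul _
        have hring : (1 + cst r H.E.card k) *
            (L * N * p ^ (E''.filter fun e => sgn e = true).card)
            = L * N * p ^ (E''.filter fun e => sgn e = true).card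
              + cst r H.E.card k *
                (L * N * p ^ (E''.filter fun e => sgn e = true).card) := by ring
        linarith
      -- Claim 6: the b-factor sums recover subgraph counts.
      have hFb : ∀ b, b ∈ Bw.B → (n:ℝ) ^ (r - b.card) *
          (∑ ψ : {v' : H.V // v' ∉ e0} → Fin n, facNorm1 (fψ ψ) b)
          = Gm H sgn (E₁.filter fun e => e ∩ e0 ⊆ S.vimage eS b) A := by
        intro b hbB
        have hpt : ∀ (ψ : {v' : H.V // v' ∉ e0} → Fin n)
            (y : {v : Fin r // v ∈ b} → Fin n),
            (if fψ ψ b y = true then (1:ℝ) else 0)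
            = ∏ e ∈ E₁.filter (fun e => e ∩ e0 ⊆ S.vimage eS b),
                fac sgn (A e) (Φ.symm (ext b y, ψ)) e := by
          intro ψ y
          apply eq_of_01_iff (by split_ifs <;> norm_num)
            ((prod01 _ _ (fun e he => hfac01 e (Finset.mem_filter.mp he).1 _)).1)
          rw [(prod01 _ _ (fun e he => hfac01 e (Finset.mem_filter.mp he).1 _)).2]
          constructor
          · intro h1 e he
            have htrue : fψ ψ b y = true := by
              by_contra hh
              rw [if_neg hh] at h1
              norm_num at h1
            have hP : ∀ e' ∈ E₁, e' ∩ e0 ⊆ S.vimage eS b →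
                fac sgn (A e') (Φ.symm (ext b y, ψ)) e' = 1 := by
              rw [hfψ] at htrue
              exact (ite_bool_eq_true_iff _).mp htrue
            obtain ⟨he₁, hcond⟩ := Finset.mem_filter.mp he
            exact hP e he₁ hcond
          · intro h
            have htrue : fψ ψ b y = true := by
              rw [hfψ]
              exact (ite_bool_eq_true_iff _).mpr
                (fun e he hcond => h e (Finset.mem_filter.mpr ⟨he, hcond⟩))
            rw [if_pos htrue]
        have hfn : ∀ ψ, facNorm1 (fψ ψ) b
            = ∑ y : {v : Fin r // v ∈ b} → Fin n,
                (if fψ ψ b y = true then (1:ℝ) else 0) := by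
          intro ψ
          rw [facNorm1, Finset.card_filter]
          push_cast
          rfl
        have hcardz : (Fintype.card ({v : Fin r // ¬ v ∈ b} → Fin n)) = n ^ (r - b.card) := by
          rw [Fintype.card_fun, Fintype.card_fin]
          congr 1
          rw [Fintype.card_subtype_compl, Fintype.card_fin, Fintype.card_coe]
        have hinner : ∀ ψ : {v' : H.V // v' ∉ e0} → Fin n,
            (∑ x : Fin r → Fin n, ∏ e ∈ E₁.filter (fun e => e ∩ e0 ⊆ S.vimage eS b),
              fac sgn (A e) (Φ.symm (x, ψ)) e)
            = (n:ℝ) ^ (r - b.card) *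
              ∑ y : {v : Fin r // v ∈ b} → Fin n,
                ∏ e ∈ E₁.filter (fun e => e ∩ e0 ⊆ S.vimage eS b),
                  fac sgn (A e) (Φ.symm (ext b y, ψ)) e := by
          intro ψ
          have hcong : ∀ x : Fin r → Fin n,
              (∏ e ∈ E₁.filter (fun e => e ∩ e0 ⊆ S.vimage eS b),
                fac sgn (A e) (Φ.symm (x, ψ)) e)
              = ∏ e ∈ E₁.filter (fun e => e ∩ e0 ⊆ S.vimage eS b),
                  fac sgn (A e) (Φ.symm (ext b (fun u => x u.1), ψ)) e :=
            fun x => Finset.prod_congr rfl fun e he =>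
              (hagree2 b x ψ e (Finset.mem_filter.mp he).2).symm
          rw [Finset.sum_congr rfl fun x _ => hcong x]
          rw [← Equiv.sum_comp (Equiv.piEquivPiSubtypeProd (fun i : Fin r => i ∈ b)
            (fun _ => Fin n)).symm
            (fun x => ∏ e ∈ E₁.filter (fun e => e ∩ e0 ⊆ S.vimage eS b),
              fac sgn (A e) (Φ.symm (ext b (fun u => x u.1), ψ)) e)]
          rw [Fintype.sum_prod_type]
          have hres : ∀ (y : {v : Fin r // v ∈ b} → Fin n)
              (z : {v : Fin r // ¬ v ∈ b} → Fin n),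
              (fun u : {v : Fin r // v ∈ b} =>
                ((Equiv.piEquivPiSubtypeProd (fun i : Fin r => i ∈ b)
                  (fun _ => Fin n)).symm (y, z)) u.1) = y := by
            intro y z
            funext u
            simp [Equiv.piEquivPiSubtypeProd_symm_apply, u.2]
          rw [Finset.sum_congr rfl (fun y _ => Finset.sum_congr rfl fun z _ => by
            rw [hres y z])]
          rw [Finset.mul_sum]
          refine Finset.sum_congr rfl fun y _ => ?_
          rw [Finset.sum_const, Finset.card_univ, hcardz, nsmul_eq_mul]
          push_cast
          ring
        rw [Gm, hreindex (fun φ => ∏ e ∈ E₁.filter (fun e => e ∩ e0 ⊆ S.vimage eS b),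
          fac sgn (A e) φ e)]
        rw [Finset.sum_congr rfl fun ψ _ => hinner ψ, ← Finset.mul_sum]
        congr 1
        refine Finset.sum_congr rfl fun ψ _ => ?_
        rw [hfn ψ]
        exact Finset.sum_congr rfl fun y _ => hpt ψ y
      -- Claim 8: the exponent count.
      have hcount : ∀ b, b ∈ Bw.B → (E'.filter fun e => sgn e = true).card
          ≤ 1 + (Bw.dstar - Bw.d b) +
            ((E₁.filter fun e => e ∩ e0 ⊆ S.vimage eS b).filter
              fun e => sgn e = true).card := by
        intro b hbB
        have hvbcard : (S.vimage eS b).card < r := by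
          have hbne : b ≠ Finset.univ := (hS eS).2.1 b hbB
          have h1 : (S.vimage eS b).card ≤ b.card := Finset.card_image_le
          have h2 : b.card < r := by
            have hss : b ⊂ Finset.univ := Finset.ssubset_univ_iff.mpr hbne
            have h3 := Finset.card_lt_card hss
            simpa using h3
          omega
        set S1 := pos.filter (fun e' => e' ≠ e0 ∧ (e' ∩ e0).Nonempty) with hS1
        set S2 := pos.filter (fun e' => (e' ∩ e0).Nonempty ∧ e' ∩ e0 ⊆ S.vimage eS b)
          with hS2
        have hS21 : S2 ⊆ S1 := by
          intro e' he'
          obtain ⟨hpos', hrest⟩ := Finset.mem_filter.mp he'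
          refine Finset.mem_filter.mpr ⟨hpos', ?_, hrest.1⟩
          rintro rfl
          have hsubvb : e' ⊆ S.vimage eS b := by
            have h5 := hrest.2
            rwa [Finset.inter_self] at h5
          have h6 := Finset.card_le_card hsubvb
          rw [hcard0] at h6
          omega
        have hd : Bw.d b = S2.card := by rw [hBw, hS2]; rfl
        have hds : Bw.dstar = S1.card := by rw [hBw, hS1]; rfl
        have hB1A : (E₁.filter fun e => e ∩ e0 ⊆ S.vimage eS b).filter
            (fun e => sgn e = true) ⊆ E'.filter (fun e => sgn e = true) := by
          intro e he
          have h1 := Finset.mem_filter.mp he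
          have h2 := Finset.mem_filter.mp h1.1
          have h3 : e ∈ E' := by
            have h4 := h2.1; rw [hE₁] at h4; exact Finset.mem_of_mem_erase h4
          exact Finset.mem_filter.mpr ⟨h3, h1.2⟩
        have hsubins : E'.filter (fun e => sgn e = true) \
            ((E₁.filter fun e => e ∩ e0 ⊆ S.vimage eS b).filter (fun e => sgn e = true))
            ⊆ insert e0 (S1 \ S2) := by
          intro e he
          obtain ⟨heA, heB⟩ := Finset.mem_sdiff.mp he
          obtain ⟨heE', hesgn⟩ := Finset.mem_filter.mp heA
          by_cases hee0 : e = e0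
          · exact Finset.mem_insert.mpr (Or.inl hee0)
          · have heE₁ : e ∈ E₁ := by
              rw [hE₁]; exact Finset.mem_erase.mpr ⟨hee0, heE'⟩
            have hnsub : ¬ (e ∩ e0 ⊆ S.vimage eS b) := by
              intro hcond
              exact heB (Finset.mem_filter.mpr
                ⟨Finset.mem_filter.mpr ⟨heE₁, hcond⟩, hesgn⟩)
            have hepos : e ∈ pos := by
              rw [hpos]; exact Finset.mem_filter.mpr ⟨hE'sub heE', hesgn⟩
            have hnon : (e ∩ e0).Nonempty := by
              rcases Finset.eq_empty_or_nonempty (e ∩ e0) with hemp | hne2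
              · exact absurd (by rw [hemp]; exact Finset.empty_subset _) hnsub
              · exact hne2
            refine Finset.mem_insert.mpr (Or.inr (Finset.mem_sdiff.mpr ⟨?_, ?_⟩))
            · rw [hS1]; exact Finset.mem_filter.mpr ⟨hepos, hee0, hnon⟩
            · intro hmem
              rw [hS2] at hmem
              exact hnsub (Finset.mem_filter.mp hmem).2.2
        have h1 := Finset.card_le_card hsubins
        have h2 := Finset.card_insert_le e0 (S1 \ S2)
        have h3 := Finset.card_sdiff_add_card_eq_card hB1A
        have h4 := Finset.card_sdiff_of_subset hS21
        have h5 := Finset.card_le_card hS21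
        rw [hds, hd]
        omega
      -- Assemble the bound for a fixed Boolean collection.
      have hmain : (∑ φ : H.V → Fin n,
            (sg * D (φ ∘ kk)) * ∏ e ∈ E₁, fac sgn (A e) φ e)
          = ∑ ψ : {v' : H.V // v' ∉ e0} → Fin n,
              sg * ∑ x : Fin r → Fin n, D x * T ψ x := by
        rw [hreindex (fun φ => (sg * D (φ ∘ kk)) * ∏ e ∈ E₁, fac sgn (A e) φ e)]
        refine Finset.sum_congr rfl fun ψ _ => ?_
        rw [Finset.mul_sum]
        refine Finset.sum_congr rfl fun x _ => ?_
        rw [hcompk x ψ]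
        show sg * D x * T ψ x = sg * (D x * T ψ x)
        ring
      rw [hmain]
      have hbsum : ∀ b, b ∈ Bw.B →
          (∑ ψ : {v' : H.V // v' ∉ e0} → Fin n,
            (n:ℝ) ^ (r - b.card) * p ^ (Bw.dstar - Bw.d b) * facNorm1 (fψ ψ) b)
          = p ^ (Bw.dstar - Bw.d b) *
            Gm H sgn (E₁.filter fun e => e ∩ e0 ⊆ S.vimage eS b) A := by
        intro b hbB
        calc (∑ ψ : {v' : H.V // v' ∉ e0} → Fin n,
              (n:ℝ) ^ (r - b.card) * p ^ (Bw.dstar - Bw.d b) * facNorm1 (fψ ψ) b)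
            = p ^ (Bw.dstar - Bw.d b) * ((n:ℝ) ^ (r - b.card) *
              ∑ ψ : {v' : H.V // v' ∉ e0} → Fin n, facNorm1 (fψ ψ) b) := by
              rw [Finset.mul_sum, Finset.mul_sum]
              exact Finset.sum_congr rfl fun ψ _ => by ring
          _ = p ^ (Bw.dstar - Bw.d b) *
              Gm H sgn (E₁.filter fun e => e ∩ e0 ⊆ S.vimage eS b) A := by
              rw [hFb b hbB]
      have hppow1 : p * p ^ (E₁.filter (fun e => sgn e = true)).card
          ≤ p ^ (E'.filter fun e => sgn e = true).card := by
        have haE'le : (E'.filter fun e => sgn e = true).card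
            ≤ (E₁.filter (fun e => sgn e = true)).card + 1 := by
          have hsub2 : E'.filter (fun e => sgn e = true)
              ⊆ insert e0 (E₁.filter (fun e => sgn e = true)) := by
            intro e he
            obtain ⟨heE', hesgn⟩ := Finset.mem_filter.mp he
            by_cases hee0 : e = e0
            · exact Finset.mem_insert.mpr (Or.inl hee0)
            · refine Finset.mem_insert.mpr (Or.inr (Finset.mem_filter.mpr ⟨?_, hesgn⟩))
              rw [hE₁]; exact Finset.mem_erase.mpr ⟨hee0, heE'⟩
          have h6 := Finset.card_le_card hsub2
          have h7 := Finset.card_insert_le e0 (E₁.filter (fun e => sgn e = true))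
          omega
        rw [← pow_succ']
        exact pow_le_pow_of_le_one hp0.le hp1.le haE'le
      have hterm1 : ε * p * Gm H sgn E₁ A ≤ (1 + cst r H.E.card k) *
          (L * ε * N * p ^ (E'.filter fun e => sgn e = true).card) := by
        have hG := hGbound E₁ (Finset.Subset.refl E₁)
        have hnn1 : (0:ℝ) ≤ (1 + cst r H.E.card k) * L * ε * N :=
          mul_nonneg (mul_nonneg (mul_nonneg hC10 hL0.le) hεnn) hN0.le
        calc ε * p * Gm H sgn E₁ A
            ≤ ε * p * ((1 + cst r H.E.card k) *
              (L * N * p ^ (E₁.filter (fun e => sgn e = true)).card)) :=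
              mul_le_mul_of_nonneg_left hG (mul_nonneg hεnn hpnn)
          _ = (1 + cst r H.E.card k) * L * ε * N *
              (p * p ^ (E₁.filter (fun e => sgn e = true)).card) := by ring
          _ ≤ (1 + cst r H.E.card k) * L * ε * N *
              p ^ (E'.filter fun e => sgn e = true).card :=
              mul_le_mul_of_nonneg_left hppow1 hnn1
          _ = (1 + cst r H.E.card k) *
              (L * ε * N * p ^ (E'.filter fun e => sgn e = true).card) := by ring
      have hterm2 : ∀ b, b ∈ Bw.B → ε * p * (p ^ (Bw.dstar - Bw.d b) *
          Gm H sgn (E₁.filter fun e => e ∩ e0 ⊆ S.vimage eS b) A)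
          ≤ (1 + cst r H.E.card k) *
            (L * ε * N * p ^ (E'.filter fun e => sgn e = true).card) := by
        intro b hbB
        have hG := hGbound (E₁.filter fun e => e ∩ e0 ⊆ S.vimage eS b)
          (Finset.filter_subset _ _)
        have hnn1 : (0:ℝ) ≤ (1 + cst r H.E.card k) * L * ε * N :=
          mul_nonneg (mul_nonneg (mul_nonneg hC10 hL0.le) hεnn) hN0.le
        have hple : p * (p ^ (Bw.dstar - Bw.d b) *
            p ^ (((E₁.filter fun e => e ∩ e0 ⊆ S.vimage eS b).filter
              fun e => sgn e = true).card))
            ≤ p ^ (E'.filter fun e => sgn e = true).card := by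
          rw [← pow_add, ← pow_succ']
          apply pow_le_pow_of_le_one hp0.le hp1.le
          have h8 := hcount b hbB
          omega
        calc ε * p * (p ^ (Bw.dstar - Bw.d b) *
              Gm H sgn (E₁.filter fun e => e ∩ e0 ⊆ S.vimage eS b) A)
            ≤ ε * p * (p ^ (Bw.dstar - Bw.d b) * ((1 + cst r H.E.card k) *
              (L * N * p ^ (((E₁.filter fun e => e ∩ e0 ⊆ S.vimage eS b).filter
                fun e => sgn e = true).card)))) := by
              apply mul_le_mul_of_nonneg_left _ (mul_nonneg hεnn hpnn)
              exact mul_le_mul_of_nonneg_left hG (pow_nonneg hpnn _)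
          _ = (1 + cst r H.E.card k) * L * ε * N *
              (p * (p ^ (Bw.dstar - Bw.d b) *
                p ^ (((E₁.filter fun e => e ∩ e0 ⊆ S.vimage eS b).filter
                  fun e => sgn e = true).card))) := by ring
          _ ≤ (1 + cst r H.E.card k) * L * ε * N *
              p ^ (E'.filter fun e => sgn e = true).card :=
              mul_le_mul_of_nonneg_left hple hnn1
          _ = (1 + cst r H.E.card k) *
              (L * ε * N * p ^ (E'.filter fun e => sgn e = true).card) := by ring
      have hcardB : ((Bw.B.card : ℝ)) ≤ 2 ^ r := by
        have h1 : Bw.B.card ≤ 2 ^ r := by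
          have h2 := Finset.card_le_univ Bw.B
          rwa [Fintype.card_finset, Fintype.card_fin] at h2
        exact_mod_cast h1
      calc |∑ ψ : {v' : H.V // v' ∉ e0} → Fin n,
            sg * ∑ x : Fin r → Fin n, D x * T ψ x|
          ≤ ∑ ψ : {v' : H.V // v' ∉ e0} → Fin n,
            |sg * ∑ x : Fin r → Fin n, D x * T ψ x| := Finset.abs_sum_le_sum_abs _ _
        _ = ∑ ψ : {v' : H.V // v' ∉ e0} → Fin n,
            |∑ x : Fin r → Fin n, D x * T ψ x| :=
            Finset.sum_congr rfl fun ψ _ => by rw [abs_mul, hsg, one_mul]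
        _ ≤ ∑ ψ : {v' : H.V // v' ∉ e0} → Fin n, ε * p * testNorm p Bw (fψ ψ) :=
            Finset.sum_le_sum fun ψ _ => hpair ψ
        _ ≤ ∑ ψ : {v' : H.V // v' ∉ e0} → Fin n, ε * p *
            ((∑ x : Fin r → Fin n, T ψ x) +
              ∑ b ∈ Bw.B, (n:ℝ) ^ (r - b.card) * p ^ (Bw.dstar - Bw.d b)
                * facNorm1 (fψ ψ) b) :=
            Finset.sum_le_sum fun ψ _ =>
              mul_le_mul_of_nonneg_left (htn_le ψ) (mul_nonneg hεnn hpnn)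
        _ = ε * p * (Gm H sgn E₁ A + ∑ b ∈ Bw.B, p ^ (Bw.dstar - Bw.d b) *
            Gm H sgn (E₁.filter fun e => e ∩ e0 ⊆ S.vimage eS b) A) := by
            rw [← Finset.mul_sum]
            congr 1
            rw [Finset.sum_add_distrib, hSa]
            congr 1
            rw [Finset.sum_comm]
            exact Finset.sum_congr rfl fun b hbB => hbsum b hbB
        _ = ε * p * Gm H sgn E₁ A + ∑ b ∈ Bw.B, ε * p * (p ^ (Bw.dstar - Bw.d b) *
            Gm H sgn (E₁.filter fun e => e ∩ e0 ⊆ S.vimage eS b) A) := by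
            rw [mul_add, Finset.mul_sum]
        _ ≤ (1 + cst r H.E.card k) *
              (L * ε * N * p ^ (E'.filter fun e => sgn e = true).card)
            + ∑ b ∈ Bw.B, (1 + cst r H.E.card k) *
              (L * ε * N * p ^ (E'.filter fun e => sgn e = true).card) :=
            add_le_add hterm1 (Finset.sum_le_sum hterm2)
        _ = (1 + cst r H.E.card k) *
              (L * ε * N * p ^ (E'.filter fun e => sgn e = true).card)
            + (Bw.B.card : ℝ) * ((1 + cst r H.E.card k) *
              (L * ε * N * p ^ (E'.filter fun e => sgn e = true).card)) := by
            rw [Finset.sum_const, nsmul_eq_mul]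
        _ ≤ (1 + cst r H.E.card k) *
              (L * ε * N * p ^ (E'.filter fun e => sgn e = true).card)
            + 2 ^ r * ((1 + cst r H.E.card k) *
              (L * ε * N * p ^ (E'.filter fun e => sgn e = true).card)) :=
            add_le_add (le_refl _) (mul_le_mul_of_nonneg_right hcardB
              (mul_nonneg hC10 hXpos))
        _ = (1 + 2 ^ r) * (1 + cst r H.E.card k) *
            (L * ε * N * p ^ (E'.filter fun e => sgn e = true).card) := by ring
    -- Telescoping over the edges.
    have hKpos : (0:ℝ) ≤ (1 + 2 ^ r) * (1 + cst r H.E.card k) *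
        (L * ε * N * p ^ (E'.filter fun e => sgn e = true).card) := by
      have h2r : (0:ℝ) ≤ 1 + 2 ^ r := by positivity
      exact mul_nonneg (mul_nonneg h2r (by linarith))
        (mul_nonneg (mul_nonneg (mul_nonneg hL0.le hε0.le) hN0.le)
          (pow_nonneg hp0.le _))
    have tele : ∀ F : Finset (Finset H.V), F ⊆ E' →
        |Gm H sgn E' c - Gm H sgn E' (fun e => if e ∈ F then c' e else c e)|
          ≤ (F.card : ℝ) * ((1 + 2 ^ r) * (1 + cst r H.E.card k) *
            (L * ε * N * p ^ (E'.filter fun e => sgn e = true).card)) := by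
      intro F
      induction F using Finset.induction_on with
      | empty =>
        intro _
        have heq : (fun e => if e ∈ (∅ : Finset (Finset H.V)) then c' e else c e) = c := by
          funext e; simp
        rw [heq, sub_self, abs_zero, Finset.card_empty]
        push_cast
        rw [zero_mul]
      | @insert a F ha ihF =>
        intro hsubF
        have haE'2 : a ∈ E' := hsubF (Finset.mem_insert_self a F)
        have hFE' : F ⊆ E' := (Finset.subset_insert a F).trans hsubF
        have hstep : |Gm H sgn E' (fun e => if e ∈ F then c' e else c e)
            - Gm H sgn E' (fun e => if e ∈ insert a F then c' e else c e)|
            ≤ (1 + 2 ^ r) * (1 + cst r H.E.card k) *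
              (L * ε * N * p ^ (E'.filter fun e => sgn e = true).card) := by
          apply swap a haE'2
          · intro e he
            by_cases hmem : e ∈ F
            · rw [if_pos hmem]; exact hc' e he
            · rw [if_neg hmem]; exact hc e he
          · intro e he
            by_cases hmem : e ∈ insert a F
            · rw [if_pos hmem]; exact hc' e he
            · rw [if_neg hmem]; exact hc e he
          · intro e _ hea
            by_cases hmem : e ∈ F
            · rw [if_pos hmem, if_pos (Finset.mem_insert_of_mem hmem)]
            · rw [if_neg hmem,
                if_neg (fun hcon => (Finset.mem_insert.mp hcon).elim hea hmem)]
        calc |Gm H sgn E' c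
              - Gm H sgn E' (fun e => if e ∈ insert a F then c' e else c e)|
            ≤ |Gm H sgn E' c - Gm H sgn E' (fun e => if e ∈ F then c' e else c e)|
              + |Gm H sgn E' (fun e => if e ∈ F then c' e else c e)
                - Gm H sgn E' (fun e => if e ∈ insert a F then c' e else c e)| :=
              abs_sub_le _ _ _
          _ ≤ (F.card : ℝ) * ((1 + 2 ^ r) * (1 + cst r H.E.card k) *
                (L * ε * N * p ^ (E'.filter fun e => sgn e = true).card))
              + (1 + 2 ^ r) * (1 + cst r H.E.card k) *
                (L * ε * N * p ^ (E'.filter fun e => sgn e = true).card) :=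
              add_le_add (ihF hFE') hstep
          _ = ((insert a F).card : ℝ) * ((1 + 2 ^ r) * (1 + cst r H.E.card k) *
                (L * ε * N * p ^ (E'.filter fun e => sgn e = true).card)) := by
              rw [Finset.card_insert_of_notMem ha]
              push_cast
              ring
    have hfinal := tele E' (Finset.Subset.refl E')
    have heq2 : Gm H sgn E' (fun e => if e ∈ E' then c' e else c e) = Gm H sgn E' c' :=
      Gm_congr H sgn fun e he => by rw [if_pos he]
    rw [heq2] at hfinal
    refine le_trans hfinal ?_
    have hcE' : (E'.card : ℝ) ≤ (H.E.card : ℝ) + 1 := by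
      have h1 := Finset.card_le_card hE'sub
      have h2 : E'.card ≤ H.E.card + 1 := by omega
      exact_mod_cast h2
    have hc1 : cst r H.E.card (k+1)
        = ((H.E.card : ℝ) + 1) * (1 + 2 ^ r) * (1 + cst r H.E.card k) := rfl
    rw [hc1]
    calc (E'.card : ℝ) * ((1 + 2 ^ r) * (1 + cst r H.E.card k) *
          (L * ε * N * p ^ (E'.filter fun e => sgn e = true).card))
        ≤ ((H.E.card : ℝ) + 1) * ((1 + 2 ^ r) * (1 + cst r H.E.card k) *
          (L * ε * N * p ^ (E'.filter fun e => sgn e = true).card)) :=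
          mul_le_mul_of_nonneg_right hcE' hKpos
      _ = ((H.E.card : ℝ) + 1) * (1 + 2 ^ r) * (1 + cst r H.E.card k) *
          (L * ε * N * p ^ (E'.filter fun e => sgn e = true).card) := by ring

end Aux4

theorem statement3 (r : ℕ) (hr : 2 ≤ r) (H : RGraph r) (sgn : Finset H.V → Bool) :
    ∃ C : ℝ, 0 < C ∧
      ∀ n : ℕ, 1 ≤ n → ∀ p : ℝ, 0 < p → p < 1 →
      ∀ S : BaseSystem H, S.Good → ∀ ε : ℝ, 0 < ε → ε ≤ 1 →
      ∀ Cs : Set (Tensor n r), Cs ⊆ adjSet n r →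
      (∀ A₁ ∈ Cs, ∀ A₂ ∈ Cs,
        bsDualNorm S (H.E.filter fun e => sgn e = true) p (fun x => A₁ x - A₂ x) ≤ ε * p) →
      ∀ L : ℝ, 1 ≤ L → ∀ Q₀ ∈ convexHull ℝ Cs,
      (∀ E' ⊆ H.E, E' ≠ H.E →
        shomE H sgn E' Q₀ ≤
          L * (n : ℝ) ^ Fintype.card H.V * p ^ (E'.filter fun e => sgn e = true).card) →
      ∀ P Q : {e // e ∈ H.E} → Tensor n r,
      (∀ e, P e ∈ convexHull ℝ Cs) → (∀ e, Q e ∈ convexHull ℝ Cs) →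
      |shomColl H sgn P - shomColl H sgn Q| ≤
        C * L * ε * (n : ℝ) ^ Fintype.card H.V *
          p ^ (H.E.filter fun e => sgn e = true).card := by
  refine ⟨cst r H.E.card H.E.card + 1, ?_, ?_⟩
  · have := cst_nonneg r H.E.card H.E.card
    linarith
  intro n hn p hp0 hp1 S hS ε hε0 hε1 Cs hCs hdiam L hL Q₀ hQ₀m hQ₀ P Q hP hQ
  have hm := master H sgn p hn hp0 hp1 S hS ε hε0 hε1 Cs hCs hdiam L hL Q₀ hQ₀m hQ₀
    H.E.card H.E (Finset.Subset.refl _) (le_refl _)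
    (fun e => if h : e ∈ H.E then P ⟨e, h⟩ else Q₀)
    (fun e => if h : e ∈ H.E then Q ⟨e, h⟩ else Q₀)
    (fun e he => by
      show (if h : e ∈ H.E then P ⟨e, h⟩ else Q₀) ∈ convexHull ℝ Cs
      rw [dif_pos he]; exact hP _)
    (fun e he => by
      show (if h : e ∈ H.E then Q ⟨e, h⟩ else Q₀) ∈ convexHull ℝ Cs
      rw [dif_pos he]; exact hQ _)
  rw [shomColl_eq_Gm H sgn P Q₀, shomColl_eq_Gm H sgn Q Q₀]
  refine le_trans hm ?_
  have hX0 : (0:ℝ) ≤ L * ε * (n:ℝ) ^ Fintype.card H.V *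
      p ^ (H.E.filter fun e => sgn e = true).card := by
    have hL0 : (0:ℝ) < L := lt_of_lt_of_le one_pos hL
    exact mul_nonneg (mul_nonneg (mul_nonneg hL0.le hε0.le) (by positivity))
      (pow_nonneg hp0.le _)
  have h1 : cst r H.E.card H.E.card ≤ cst r H.E.card H.E.card + 1 := by linarith
  calc cst r H.E.card H.E.card * (L * ε * (n:ℝ) ^ Fintype.card H.V *
        p ^ (H.E.filter fun e => sgn e = true).card)
      ≤ (cst r H.E.card H.E.card + 1) * (L * ε * (n:ℝ) ^ Fintype.card H.V *
        p ^ (H.E.filter fun e => sgn e = true).card) :=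
        mul_le_mul_of_nonneg_right h1 hX0
    _ = (cst r H.E.card H.E.card + 1) * L * ε * (n:ℝ) ^ Fintype.card H.V *
        p ^ (H.E.filter fun e => sgn e = true).card := by ring
end

section
/- Let H be a Sidorenko r-graph, let δ ∈ (0,1), n ≥ r and p ∈ (0,1). Set q̂ = (1−δ)^{1/e(H)} p and q = q̂ · n^r / (n(n−1)⋯(n−r+1)), and assume q ≤ p. Then, with A ~ μ_p, − log P( t(H, A) ≤ (1−δ) p^{e(H)} ) ≥ binom(n, r) · I_p(q). -/
open scoped Classical
open Finset

/-! ### Auxiliary lemmas for statement19 -/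

/-- Number of selected edges. -/
noncomputable def mcount {n r : ℕ} (ω : EdgeSel n r) : ℕ :=
  (Finset.univ.filter fun I => ω I).card

lemma setEval_const {n r : ℕ} (c : ℝ) (I : Idx n r) : setEval (fun _ => c) I = c := rfl

lemma wWeight_const {n r : ℕ} (c : ℝ) (ω : EdgeSel n r) :
    wWeight (fun _ => c) ω = c ^ mcount ω * (1 - c) ^ (Fintype.card (Idx n r) - mcount ω) := by
  unfold wWeight
  simp only [setEval_const]
  rw [Finset.prod_ite (fun _ => c) (fun _ => 1 - c), Finset.prod_const, Finset.prod_const,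
    Finset.filter_not, Finset.card_sdiff_of_subset (Finset.filter_subset _ _)]
  simp [mcount]

lemma sum_fun_bool {α : Type*} [Fintype α] [DecidableEq α] (a b : α → ℝ) :
    ∑ ω : α → Bool, ∏ i : α, (if ω i then a i else b i) = ∏ i : α, (a i + b i) := by
  classical
  rw [Finset.prod_add]
  refine Finset.sum_bij' (fun (ω : α → Bool) (_ : ω ∈ Finset.univ) => Finset.univ.filter fun i => ω i)
    (fun t _ => fun i => decide (i ∈ t)) ?_ ?_ ?_ ?_ ?_
  · intro ω _; exact Finset.mem_powerset.mpr (Finset.subset_univ _)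
  · intro t _; exact Finset.mem_univ _
  · intro ω _; funext i; simp
  · intro t _; ext i; simp
  · intro ω _
    rw [Finset.prod_ite (fun i => a i) (fun i => b i), Finset.filter_not]

lemma sum_wWeight_const {n r : ℕ} (c : ℝ) :
    ∑ ω : EdgeSel n r, wWeight (fun _ => c) ω = 1 := by
  have h := sum_fun_bool (fun _ : Idx n r => c) (fun _ : Idx n r => 1 - c)
  simp only [add_sub_cancel, Finset.prod_const_one] at h
  rw [← h]
  rfl

lemma adjOf_nonneg {n r : ℕ} (ω : EdgeSel n r) (x : Fin r → Fin n) : 0 ≤ adjOf ω x := by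
  unfold adjOf
  split_ifs <;> norm_num

lemma adjOf_apply_inj {n r : ℕ} (ω : EdgeSel n r) (x : Fin r → Fin n)
    (h : Function.Injective x) (I : Idx n r) (hI : I.1 = Finset.image x Finset.univ) :
    adjOf ω x = if ω I then 1 else 0 := by
  obtain ⟨Is, hc⟩ := I
  simp only at hI
  subst hI
  simp [adjOf, h]

lemma adjOf_apply_not_inj {n r : ℕ} (ω : EdgeSel n r) (x : Fin r → Fin n)
    (h : ¬Function.Injective x) : adjOf ω x = 0 := by
  simp [adjOf, h]

lemma adjOf_mem_wtSet {n r : ℕ} (ω : EdgeSel n r) : adjOf ω ∈ wtSet n r := by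
  refine ⟨?_, ?_, fun x hx => adjOf_apply_not_inj ω x hx⟩
  · intro σ x
    by_cases h : Function.Injective x
    · have h' : Function.Injective (x ∘ σ) := h.comp σ.injective
      have himg : Finset.image (x ∘ σ) Finset.univ = Finset.image x Finset.univ := by
        ext a
        simp only [Finset.mem_image, Finset.mem_univ, true_and, Function.comp_apply]
        constructor
        · rintro ⟨k, rfl⟩; exact ⟨σ k, rfl⟩
        · rintro ⟨k, rfl⟩; exact ⟨σ.symm k, by simp⟩
      have hcard : (Finset.image x Finset.univ).card = r := by
        rw [Finset.card_image_of_injective _ h, Finset.card_univ, Fintype.card_fin]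
      rw [adjOf_apply_inj ω (x ∘ σ) h' ⟨Finset.image x Finset.univ, hcard⟩ himg.symm,
        adjOf_apply_inj ω x h ⟨Finset.image x Finset.univ, hcard⟩ rfl]
    · rw [adjOf_apply_not_inj ω x h, adjOf_apply_not_inj ω _ (fun hc => h (by
        have : x = (x ∘ σ) ∘ σ.symm := by funext k; simp
        rw [this]; exact hc.comp σ.symm.injective))]
  · intro x
    unfold adjOf
    split_ifs <;> norm_num

lemma sum_adjOf_ge {n r : ℕ} (ω : EdgeSel n r) :
    (r.factorial : ℝ) * mcount ω ≤ ∑ x : Fin r → Fin n, adjOf ω x := by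
  classical
  set F : Idx n r × Equiv.Perm (Fin r) → (Fin r → Fin n) :=
    fun Iσ k => ((Iσ.1.1.orderIsoOfFin Iσ.1.2) (Iσ.2 k)).1 with hF
  have hFinj_pt : ∀ Iσ, Function.Injective (F Iσ) := by
    intro ⟨I, σ⟩ a b hab
    have h1 : Function.Injective fun k : Fin r => ((I.1.orderIsoOfFin I.2) k).1 :=
      fun a b h => (I.1.orderIsoOfFin I.2).injective (Subtype.ext h)
    exact σ.injective (h1 hab)
  have himage : ∀ Iσ, Finset.image (F Iσ) Finset.univ = Iσ.1.1 := by
    rintro ⟨I, σ⟩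
    refine Finset.eq_of_subset_of_card_le ?_ ?_
    · intro a ha
      obtain ⟨k, _, rfl⟩ := Finset.mem_image.mp ha
      exact ((I.1.orderIsoOfFin I.2) (σ k)).2
    · rw [Finset.card_image_of_injective _ (hFinj_pt ⟨I, σ⟩), Finset.card_univ,
        Fintype.card_fin, I.2]
  have hval : ∀ Iσ : Idx n r × Equiv.Perm (Fin r),
      adjOf ω (F Iσ) = if ω Iσ.1 then 1 else 0 := fun Iσ =>
    adjOf_apply_inj ω (F Iσ) (hFinj_pt Iσ) Iσ.1 (himage Iσ).symm
  have hFinj : Function.Injective F := by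
    intro ⟨I, σ⟩ ⟨J, τ⟩ hab
    have hIJ : I = J := by
      apply Subtype.ext
      rw [← himage ⟨I, σ⟩, ← himage ⟨J, τ⟩, hab]
    subst hIJ
    have hστ : σ = τ := by
      apply Equiv.ext
      intro k
      have := congrFun hab k
      simp only [hF] at this
      exact (I.1.orderIsoOfFin I.2).injective (Subtype.ext this)
    rw [hστ]
  have hsum : ∑ Iσ : Idx n r × Equiv.Perm (Fin r), adjOf ω (F Iσ)
      = (r.factorial : ℝ) * mcount ω := by
    simp only [hval]
    rw [Fintype.sum_prod_type]
    trans ∑ I : Idx n r, (r.factorial : ℝ) * (if ω I then 1 else 0)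
    · refine Finset.sum_congr rfl fun I _ => ?_
      simp [Finset.card_univ, Fintype.card_perm]
      split_ifs <;> simp [Finset.card_univ, Fintype.card_perm]
    · rw [← Finset.mul_sum, Finset.sum_boole]
      simp [mcount]
  calc (r.factorial : ℝ) * mcount ω
      = ∑ Iσ : Idx n r × Equiv.Perm (Fin r), adjOf ω (F Iσ) := hsum.symm
    _ = ∑ x ∈ Finset.univ.image F, adjOf ω x :=
        (Finset.sum_image fun a _ b _ h => hFinj h).symm
    _ ≤ ∑ x : Fin r → Fin n, adjOf ω x :=
        Finset.sum_le_sum_of_subset_of_nonneg (Finset.subset_univ _)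
          fun x _ _ => adjOf_nonneg ω x

lemma chernoff_term {p q : ℝ} (hq0 : 0 < q) (hqp : q ≤ p) (hp1 : p < 1)
    {N k : ℕ} (hk : k ≤ N) (hkq : (k : ℝ) ≤ q * N) :
    p ^ k * (1 - p) ^ (N - k) ≤
      Real.exp (-((N : ℝ) * entBer p q)) * (q ^ k * (1 - q) ^ (N - k)) := by
  have hp0 : 0 < p := lt_of_lt_of_le hq0 hqp
  have h1p : 0 < 1 - p := by linarith
  have h1q : 0 < 1 - q := by linarith
  have hL : 0 < p ^ k * (1 - p) ^ (N - k) := by positivity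
  have hR : 0 < Real.exp (-((N : ℝ) * entBer p q)) * (q ^ k * (1 - q) ^ (N - k)) := by
    positivity
  rw [← Real.log_le_log_iff hL hR,
    Real.log_mul (by positivity) (by positivity),
    Real.log_mul (by positivity) (by positivity),
    Real.log_mul (by positivity) (by positivity),
    Real.log_exp, Real.log_pow, Real.log_pow, Real.log_pow, Real.log_pow]
  have hNk : ((N - k : ℕ) : ℝ) = (N : ℝ) - k := by
    rw [Nat.cast_sub hk]
  rw [hNk]
  unfold entBer
  rw [Real.log_div (ne_of_gt hq0) (ne_of_gt hp0),
    Real.log_div (ne_of_gt h1q) (ne_of_gt h1p)]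
  have hab : Real.log q ≤ Real.log p := Real.log_le_log hq0 hqp
  have hcd : Real.log (1 - p) ≤ Real.log (1 - q) := Real.log_le_log h1p (by linarith)
  nlinarith [mul_nonneg (sub_nonneg.mpr hkq)
    (by linarith : (0 : ℝ) ≤ (Real.log p - Real.log q) + (Real.log (1 - q) - Real.log (1 - p)))]

theorem statement19 (r : ℕ) (hr : 2 ≤ r) (H : RGraph r)
    (hSid : ∀ n : ℕ, 1 ≤ n → ∀ Q ∈ wtSet n r,
      tR H Q ≥ ((∑ x : Fin r → Fin n, Q x) / (n : ℝ) ^ r) ^ H.E.card)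
    (δ : ℝ) (hδ₀ : 0 < δ) (hδ₁ : δ < 1)
    (n : ℕ) (hn : r ≤ n) (p : ℝ) (hp : 0 < p) (hp1 : p < 1)
    (q : ℝ)
    (hq : q = (1 - δ) ^ ((1 : ℝ) / (H.E.card : ℝ)) * p * (n : ℝ) ^ r /
      (n.descFactorial r : ℝ))
    (hqp : q ≤ p) :
    -Real.log (muP n r p {A | tR H A ≤ (1 - δ) * p ^ H.E.card}) ≥
      (n.choose r : ℝ) * entBer p q := by
  classical
  set E : Set (Tensor n r) := {A | tR H A ≤ (1 - δ) * p ^ H.E.card} with hE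
  have hn1 : 1 ≤ n := le_trans (by omega : 1 ≤ r) hn
  have hδ' : (0 : ℝ) < 1 - δ := by linarith
  have hdesc_lt : n.descFactorial r < n ^ r := by
    obtain ⟨k, rfl⟩ : ∃ k, r = k + 1 := ⟨r - 1, by omega⟩
    have hk1 : 1 ≤ k := by omega
    calc n.descFactorial (k + 1) = (n - k) * n.descFactorial k := Nat.descFactorial_succ n k
      _ ≤ (n - 1) * n ^ k := Nat.mul_le_mul (by omega) (Nat.descFactorial_le_pow n k)
      _ < n * n ^ k := by
          have hpk : 0 < n ^ k := Nat.pow_pos (by omega)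
          exact Nat.mul_lt_mul_of_lt_of_le (by omega) le_rfl hpk
      _ = n ^ (k + 1) := by ring
  have hdpos : 0 < n.descFactorial r := by
    rw [Nat.descFactorial_eq_factorial_mul_choose]
    exact Nat.mul_pos r.factorial_pos (Nat.choose_pos hn)
  have hnr : (0 : ℝ) < (n : ℝ) ^ r := by
    have : (0 : ℝ) < (n : ℝ) := by exact_mod_cast hn1
    positivity
  have hdposℝ : (0 : ℝ) < (n.descFactorial r : ℝ) := by exact_mod_cast hdpos
  rcases Nat.eq_zero_or_pos H.E.card with he0 | hepos
  · exfalso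
    rw [he0] at hq
    simp only [Nat.cast_zero, div_zero, Real.rpow_zero, one_mul] at hq
    have h1 : (n.descFactorial r : ℝ) < (n : ℝ) ^ r := by exact_mod_cast hdesc_lt
    have : p < q := by
      rw [hq, lt_div_iff₀ hdposℝ]
      nlinarith
    linarith
  · set N := Fintype.card (Idx n r) with hNdef
    have hNchoose : (N : ℝ) = (n.choose r : ℝ) := by
      rw [hNdef]
      norm_cast
      simpa using Fintype.card_finset_len (α := Fin n) r
    have hecard : ((H.E.card : ℝ)) ≠ 0 := by
      exact_mod_cast Nat.pos_iff_ne_zero.mp hepos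
    have hqh0 : (0 : ℝ) < (1 - δ) ^ ((1 : ℝ) / (H.E.card : ℝ)) * p :=
      mul_pos (Real.rpow_pos_of_pos hδ' _) hp
    have hq0 : 0 < q := by
      rw [hq]
      exact div_pos (mul_pos hqh0 hnr) hdposℝ
    have hfac : (0 : ℝ) < (r.factorial : ℝ) := by exact_mod_cast r.factorial_pos
    have hch : (0 : ℝ) < (n.choose r : ℝ) := by exact_mod_cast Nat.choose_pos hn
    have hdesc_eq : (n.descFactorial r : ℝ) = (r.factorial : ℝ) * (n.choose r : ℝ) := by
      exact_mod_cast Nat.descFactorial_eq_factorial_mul_choose n r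
    -- the key bound on the number of edges of configurations in the event
    have hmb : ∀ ω : EdgeSel n r, adjOf ω ∈ E → (mcount ω : ℝ) ≤ q * N := by
      intro ω hω
      have hwt := adjOf_mem_wtSet ω
      have h1 := hSid n hn1 _ hwt
      have hev : tR H (adjOf ω) ≤ (1 - δ) * p ^ H.E.card := hω
      set S := ∑ x : Fin r → Fin n, adjOf ω x with hS
      have hS0 : 0 ≤ S := Finset.sum_nonneg fun x _ => adjOf_nonneg ω x
      have hpow : (S / (n : ℝ) ^ r) ^ H.E.card ≤
          ((1 - δ) ^ ((1 : ℝ) / (H.E.card : ℝ)) * p) ^ H.E.card := by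
        have hrpow : ((1 - δ) ^ ((1 : ℝ) / (H.E.card : ℝ))) ^ H.E.card = 1 - δ := by
          rw [← Real.rpow_natCast ((1 - δ) ^ ((1 : ℝ) / (H.E.card : ℝ))) H.E.card,
            ← Real.rpow_mul hδ'.le, one_div, inv_mul_cancel₀ hecard, Real.rpow_one]
        rw [mul_pow, hrpow]
        exact le_trans h1 hev
      have hSle : S / (n : ℝ) ^ r ≤ (1 - δ) ^ ((1 : ℝ) / (H.E.card : ℝ)) * p :=
        le_of_pow_le_pow_left₀ (Nat.pos_iff_ne_zero.mp hepos) hqh0.le hpow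
      have hm : (r.factorial : ℝ) * mcount ω ≤ S := sum_adjOf_ge ω
      have hSub : S ≤ (1 - δ) ^ ((1 : ℝ) / (H.E.card : ℝ)) * p * (n : ℝ) ^ r := by
        rw [div_le_iff₀ hnr] at hSle
        exact hSle
      rw [hq, hdesc_eq, hNchoose, div_mul_eq_mul_div, le_div_iff₀ (by positivity)]
      nlinarith [mul_le_mul_of_nonneg_right (hm.trans hSub) hch.le]
    set c := Real.exp (-((N : ℝ) * entBer p q)) with hc
    have hmuP : muP n r p E =
        ∑ ω : EdgeSel n r, if adjOf ω ∈ E then wWeight (fun _ => p) ω else 0 := rfl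
    have hle : muP n r p E ≤ c := by
      rw [hmuP]
      calc ∑ ω : EdgeSel n r, (if adjOf ω ∈ E then wWeight (fun _ => p) ω else 0)
          ≤ ∑ ω : EdgeSel n r, c * wWeight (fun _ => q) ω := by
            refine Finset.sum_le_sum fun ω _ => ?_
            by_cases hω : adjOf ω ∈ E
            · rw [if_pos hω, wWeight_const p ω, wWeight_const q ω]
              exact chernoff_term hq0 hqp hp1
                ((Finset.card_filter_le _ _).trans (le_of_eq Finset.card_univ)) (hmb ω hω)
            · rw [if_neg hω]
              have h1q : (0 : ℝ) ≤ 1 - q := by linarith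
              have : 0 ≤ wWeight (fun _ => q) ω := by
                rw [wWeight_const]
                exact mul_nonneg (pow_nonneg hq0.le _) (pow_nonneg h1q _)
              exact mul_nonneg (Real.exp_pos _).le this
        _ = c * ∑ ω : EdgeSel n r, wWeight (fun _ => q) ω := by rw [Finset.mul_sum]
        _ = c := by rw [sum_wWeight_const]; ring
    obtain ⟨e₀, he₀⟩ := Finset.card_pos.mp hepos
    have hzero_mem : adjOf (fun _ : Idx n r => false) ∈ E := by
      have hzt : adjOf (fun _ : Idx n r => false) = fun _ => (0 : ℝ) := by
        funext x
        simp [adjOf]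
      show tR H (adjOf fun _ => false) ≤ (1 - δ) * p ^ H.E.card
      rw [hzt]
      have htz : tR (n := n) H (fun _ => (0 : ℝ)) = 0 := by
        unfold tR homR homE
        have hz : ∀ φ : H.V → Fin n, ∏ e ∈ H.E, edgeEval (n := n) (r := r) (fun _ => (0 : ℝ)) φ e = 0 := by
          intro φ
          refine Finset.prod_eq_zero he₀ ?_
          unfold edgeEval
          split <;> rfl
        simp [hz]
      rw [htz]
      positivity
    have hpos : 0 < muP n r p E := by
      rw [hmuP]
      refine Finset.sum_pos' (fun ω _ => ?_) ⟨fun _ => false, Finset.mem_univ _, ?_⟩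
      · split_ifs
        · rw [wWeight_const]
          exact mul_nonneg (pow_nonneg hp.le _) (pow_nonneg (by linarith) _)
        · exact le_rfl
      · rw [if_pos hzero_mem, wWeight_const]
        exact mul_pos (pow_pos hp _) (pow_pos (by linarith) _)
    have hlog : Real.log (muP n r p E) ≤ -((N : ℝ) * entBer p q) := by
      have h := (Real.log_le_log_iff hpos (Real.exp_pos _)).mpr hle
      rwa [Real.log_exp] at h
    rw [ge_iff_le, ← hNchoose]
    linarith
end
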